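/- arXiv:0808.3105 — 4 statements merged into one kernel-verified Lean document; each statement's English description precedes it below -/
import Mathlib

section
/- Fix x ∈ (0,1]^n and let E = {y ∈ I^n : y_i = x_i for some i}. For every y ∈ I^n \ E there exists a unique reflection ξ of I^n such that ξ(y) < ξ(x) coordinatewise. Moreover, for distinct reflections ξ ≠ η, the intersection ξ([0,ξ(x)]) ∩ η([0,η(x)]) is contained in E. -/
open MeasureTheory

/-- The unit cube `I^n ⊆ ℝ^n`. -/
def cube (n : ℕ) : Set (Fin n → ℝ) := Set.univ.pi fun _ => Set.Icc (0:ℝ) 1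

/-- The box `[0,x] = [0,x_1] × ⋯ × [0,x_n]`. -/
def box {n : ℕ} (x : Fin n → ℝ) : Set (Fin n → ℝ) := Set.univ.pi fun i => Set.Icc 0 (x i)

/-- The reflection of `I^n` replacing the `i`-th coordinate by `1 - x i` for `i ∈ S`. -/
def reflMap {n : ℕ} (S : Finset (Fin n)) (x : Fin n → ℝ) : Fin n → ℝ :=
  fun i => if i ∈ S then 1 - x i else x i

/-- `x_S`: the point obtained from `x` by setting the coordinates in `S` equal to `1`. -/
def setTo1 {n : ℕ} (S : Finset (Fin n)) (x : Fin n → ℝ) : Fin n → ℝ :=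
  fun i => if i ∈ S then 1 else x i

lemma image_box_mem {n : ℕ} (x : Fin n → ℝ) (S : Finset (Fin n)) (z : Fin n → ℝ)
    (hz : z ∈ reflMap S '' box (reflMap S x)) (i : Fin n) :
    if i ∈ S then x i ≤ z i else z i ≤ x i := by
  obtain ⟨w, hw, rfl⟩ := hz
  have hwi := hw i (Set.mem_univ i)
  simp only [reflMap] at hwi ⊢
  by_cases h : i ∈ S <;> simp [h] at hwi ⊢ <;> linarith [hwi.1, hwi.2]

/-- Fix `x ∈ (0,1]^n` and let `E = {y : y_i = x_i for some i}`.  For every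
`y ∈ I^n \ E` there is a unique reflection `ξ` with `ξ(y) < ξ(x)` coordinatewise;
moreover for distinct reflections `ξ ≠ η`, `ξ([0,ξ(x)]) ∩ η([0,η(x)]) ⊆ E`. -/
theorem stmt12 {n : ℕ} (x : Fin n → ℝ) (hx : ∀ i, x i ∈ Set.Ioc (0:ℝ) 1) :
    (∀ y ∈ cube n, (∀ i, y i ≠ x i) →
      ∃! S : Finset (Fin n), ∀ i, reflMap S y i < reflMap S x i) ∧
    (∀ S T : Finset (Fin n), S ≠ T →
      (reflMap S '' box (reflMap S x)) ∩ (reflMap T '' box (reflMap T x)) ⊆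
        {y | ∃ i, y i = x i}) := by
  constructor
  · intro y _ hy
    refine ⟨Finset.univ.filter (fun i => x i < y i), ?_, ?_⟩
    · intro i
      simp only [reflMap, Finset.mem_filter, Finset.mem_univ, true_and]
      by_cases h : x i < y i
      · simp only [if_pos h]; linarith
      · simp only [if_neg h]; exact lt_of_le_of_ne (not_lt.mp h) (hy i)
    · intro T hT
      ext i
      simp only [Finset.mem_filter, Finset.mem_univ, true_and]
      have := hT i
      simp only [reflMap] at this
      by_cases h : i ∈ T <;> simp [h] at this ⊢ <;> linarith
  · intro S T hST z hz
    have h1 := image_box_mem x S z hz.1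
    have h2 := image_box_mem x T z hz.2
    have : ∃ i, (i ∈ S) ≠ (i ∈ T) := by
      by_contra h
      push_neg at h
      exact hST (Finset.ext fun i => by rw [h i])
    obtain ⟨i, hi⟩ := this
    refine ⟨i, ?_⟩
    have h1 := image_box_mem x S z hz.1 i
    have h2 := image_box_mem x T z hz.2 i
    by_cases hS : i ∈ S <;> by_cases hT : i ∈ T <;> simp [hS, hT] at hi h1 h2 <;> linarith
end

section
/- Let κ be a multivariate measure of concordance. If C is an n-copula and S ⊆ {1,...,n} with cardinality s, then r_n κ_n(σ_S*(C)) = ∑_{j=n-s}^{n} (-1)^{n-s+j} r_n r_{n-1} ⋯ r_j ∑_{P ∈ S(n-j)} κ_j(C_P), where S(k) denotes the k-element subsets of S and C_P is the extended marginal of C setting coordinates in P to 1 (with κ_j evaluated on its proper j-copula). -/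
open MeasureTheory Filter

noncomputable section

/-- `C` is an `n`-copula: on `I^n` it is the box-distribution function of a probability
measure all of whose one-dimensional margins are uniform on `[0,1]`. -/
def IsCopula {n : ℕ} (C : (Fin n → ℝ) → ℝ) : Prop :=
  ∃ μ : Measure (Fin n → ℝ), IsProbabilityMeasure μ ∧
    (∀ x ∈ cube n, C x = (μ (box x)).toReal) ∧
    (∀ i : Fin n, μ.map (fun y => y i) = volume.restrict (Set.Icc (0:ℝ) 1))

/-- The action `τ*(C) = C ∘ τ` of a coordinate permutation (with index permutation `τ`). -/
def permTrans {n : ℕ} (τ : Equiv.Perm (Fin n)) (C : (Fin n → ℝ) → ℝ) : (Fin n → ℝ) → ℝ :=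
  fun x => C fun i => x (τ i)

/-- The action `σ_S*(C)(x) = μ_C(σ_S([0,x]))` of the reflection `σ_S`, written out by
inclusion–exclusion in terms of the values of `C`. -/
def reflTrans {n : ℕ} (S : Finset (Fin n)) (C : (Fin n → ℝ) → ℝ) : (Fin n → ℝ) → ℝ :=
  fun x => ∑ T ∈ S.powerset, (-1 : ℝ) ^ T.card *
    C (fun i => if i ∈ T then 1 - x i else if i ∈ S then 1 else x i)

/-- The comonotone copula `M(t_1,…,t_n) = min(t_1,…,t_n)`. -/
def Mcop (n : ℕ) : (Fin n → ℝ) → ℝ := fun x => iInf x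

/-- The independence copula `Π(t_1,…,t_n) = t_1 ⋯ t_n`. -/
def Pcop (n : ℕ) : (Fin n → ℝ) → ℝ := fun x => ∏ i, x i

/-- The proper `(n - card P)`-copula of the extended marginal `C_P` of `C`:
coordinates in `P` are set equal to `1` and the remaining coordinates are relabelled
in increasing order. -/
def properMarg {n : ℕ} (C : (Fin n → ℝ) → ℝ) (P : Finset (Fin n)) :
    (Fin (Pᶜ.card) → ℝ) → ℝ :=
  fun y => C fun i => if h : i ∈ Pᶜ then y ((Pᶜ.orderIsoOfFin rfl).symm ⟨i, h⟩) else 1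

/-- A multivariate measure of concordance `κ = ({κ_n},{r_n})` in the sense of Taylor:
normalization, monotonicity, continuity, permutation invariance, duality, the
reflection symmetry property and the transition property, extended by `κ_0 = κ_1 = 0`. -/
structure ConcordanceMeasure where
  κ : (n : ℕ) → ((Fin n → ℝ) → ℝ) → ℝ
  r : ℕ → ℝ
  kappa_zero : ∀ C, κ 0 C = 0
  kappa_one : ∀ C, κ 1 C = 0
  normM : ∀ n, 2 ≤ n → κ n (Mcop n) = 1
  normPi : ∀ n, 2 ≤ n → κ n (Pcop n) = 0
  mono : ∀ n, 2 ≤ n → ∀ A B : (Fin n → ℝ) → ℝ, IsCopula A → IsCopula B →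
    (∀ x ∈ cube n, A x ≤ B x) →
    (∀ x ∈ cube n, reflTrans Finset.univ A x ≤ reflTrans Finset.univ B x) →
    κ n A ≤ κ n B
  cont : ∀ n, 2 ≤ n → ∀ (C : (Fin n → ℝ) → ℝ) (Cm : ℕ → (Fin n → ℝ) → ℝ),
    IsCopula C → (∀ m, IsCopula (Cm m)) →
    TendstoUniformlyOn Cm C atTop (cube n) →
    Tendsto (fun m => κ n (Cm m)) atTop (nhds (κ n C))
  permInv : ∀ n, 2 ≤ n → ∀ C : (Fin n → ℝ) → ℝ, IsCopula C →
    ∀ τ : Equiv.Perm (Fin n), κ n (permTrans τ C) = κ n C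
  duality : ∀ n, 2 ≤ n → ∀ C : (Fin n → ℝ) → ℝ, IsCopula C →
    κ n (reflTrans Finset.univ C) = κ n C
  rsp : ∀ n, 2 ≤ n → ∀ C : (Fin n → ℝ) → ℝ, IsCopula C →
    ∑ S : Finset (Fin n), κ n (reflTrans S C) = 0
  transition : ∀ n, 2 ≤ n → ∀ (C : (Fin n → ℝ) → ℝ) (E : (Fin (n+1) → ℝ) → ℝ),
    IsCopula C → IsCopula E →
    (∀ x ∈ cube n, C x = E (fun i : Fin (n+1) =>
      if h : (i : ℕ) = 0 then 1 else x ⟨(i : ℕ) - 1, by have := i.isLt; omega⟩)) →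
    r n * κ n C = κ (n+1) E + κ (n+1) (reflTrans {0} E)


-- ===== chunk 1: basics =====
section Basics
variable {n : ℕ}

lemma mem_cube {x : Fin n → ℝ} : x ∈ cube n ↔ ∀ i, x i ∈ Set.Icc (0:ℝ) 1 := by
  constructor
  · intro h i; exact h i trivial
  · intro h i _; exact h i

lemma mem_box {x y : Fin n → ℝ} : y ∈ box x ↔ ∀ i, y i ∈ Set.Icc 0 (x i) := by
  constructor
  · intro h i; exact h i trivial
  · intro h i _; exact h i

lemma measurableSet_box (x : Fin n → ℝ) : MeasurableSet (box x) :=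
  MeasurableSet.univ_pi fun i => measurableSet_Icc

lemma margNull {μ : Measure (Fin n → ℝ)} {i : Fin n}
    (h : μ.map (fun y => y i) = volume.restrict (Set.Icc (0:ℝ) 1))
    {s : Set ℝ} (hs : MeasurableSet s) (hv : (volume.restrict (Set.Icc (0:ℝ) 1)) s = 0) :
    μ {y | y i ∈ s} = 0 := by
  have := Measure.map_apply (measurable_pi_apply i) hs (μ := μ)
  rw [h] at this
  rw [← hv, this]; rfl

lemma margNull_notIcc {μ : Measure (Fin n → ℝ)} {i : Fin n}
    (h : μ.map (fun y => y i) = volume.restrict (Set.Icc (0:ℝ) 1)) :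
    μ {y | y i ∉ Set.Icc (0:ℝ) 1} = 0 := by
  refine margNull h measurableSet_Icc.compl ?_
  rw [Measure.restrict_apply measurableSet_Icc.compl, Set.compl_inter_self]
  simp

lemma margNull_eq {μ : Measure (Fin n → ℝ)} {i : Fin n}
    (h : μ.map (fun y => y i) = volume.restrict (Set.Icc (0:ℝ) 1)) (c : ℝ) :
    μ {y | y i = c} = 0 := by
  refine margNull h (measurableSet_singleton c) ?_
  rw [Measure.restrict_apply (measurableSet_singleton c)]
  exact le_antisymm (le_trans (measure_mono Set.inter_subset_left) (by simp)) zero_le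

/-- A copula vanishes on the cube where some coordinate is 0. -/
lemma copula_zero {C : (Fin n → ℝ) → ℝ} (hC : IsCopula C) {x : Fin n → ℝ}
    (hx : x ∈ cube n) {i : Fin n} (hxi : x i = 0) : C x = 0 := by
  obtain ⟨μ, hμp, hμb, hμm⟩ := hC
  rw [hμb x hx]
  have : μ (box x) = 0 := by
    refine le_antisymm (le_trans (measure_mono ?_) (margNull_eq (hμm i) 0).le) zero_le
    intro y hy
    have := (mem_box.mp hy) i
    rw [hxi] at this
    simpa using le_antisymm this.2 this.1
  simp [this]

end Basics

-- ===== chunk 2 =====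
section Chunk2
variable {n m : ℕ}

lemma isCopula_congr {A B : (Fin n → ℝ) → ℝ} (hA : IsCopula A)
    (h : ∀ x ∈ cube n, A x = B x) : IsCopula B := by
  obtain ⟨μ, h1, h2, h3⟩ := hA
  exact ⟨μ, h1, fun x hx => (h x hx) ▸ h2 x hx, h3⟩

/-- `κ_n` only depends on the values of a copula on the cube. -/
lemma kappa_congr (κ : ConcordanceMeasure) (hn : 2 ≤ n) {A B : (Fin n → ℝ) → ℝ}
    (hA : IsCopula A) (hB : IsCopula B) (h : ∀ x ∈ cube n, A x = B x) :
    κ.κ n A = κ.κ n B := by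
  have h1 : Tendsto (fun _ : ℕ => κ.κ n A) atTop (nhds (κ.κ n B)) := by
    refine κ.cont n hn B (fun _ => A) hB (fun _ => hA) ?_
    rw [Metric.tendstoUniformlyOn_iff]
    intro ε hε
    filter_upwards with m x hx
    rw [h x hx]
    simpa using hε
  exact (tendsto_nhds_unique tendsto_const_nhds h1)

lemma kappa_le_one (κ : ConcordanceMeasure) {k : ℕ} (hk : k ≤ 1)
    (C : (Fin k → ℝ) → ℝ) : κ.κ k C = 0 := by
  interval_cases k
  · exact κ.kappa_zero C
  · exact κ.kappa_one C

lemma extend_mem_cube {e : Fin m → Fin n} {x : Fin m → ℝ} (hx : x ∈ cube m)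
    (he : Function.Injective e) :
    Function.extend e x (fun _ => (1:ℝ)) ∈ cube n := by
  rw [mem_cube]
  intro j
  by_cases hj : ∃ k, e k = j
  · obtain ⟨k, rfl⟩ := hj
    rw [he.extend_apply]
    exact mem_cube.mp hx k
  · rw [Function.extend_apply' _ _ _ hj]
    exact ⟨zero_le_one, le_refl 1⟩

/-- Reindexing a copula along an injection gives a copula. -/
lemma isCopula_comp {C : (Fin n → ℝ) → ℝ} (hC : IsCopula C)
    (e : Fin m → Fin n) (he : Function.Injective e) :
    IsCopula (fun x => C (Function.extend e x (fun _ => 1))) := by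
  obtain ⟨μ, hμp, hμb, hμm⟩ := hC
  have hF : Measurable (fun (y : Fin n → ℝ) (k : Fin m) => y (e k)) :=
    measurable_pi_lambda _ fun k => measurable_pi_apply (e k)
  refine ⟨μ.map (fun y k => y (e k)), Measure.isProbabilityMeasure_map hF.aemeasurable, ?_, ?_⟩
  · intro x hx
    show C (Function.extend e x fun _ => 1) = _
    rw [hμb _ (extend_mem_cube hx he)]
    congr 1
    rw [Measure.map_apply hF (measurableSet_box x)]
    set A := (fun (y : Fin n → ℝ) k => y (e k)) ⁻¹' box x with hA
    set N := ⋃ j, {y : Fin n → ℝ | y j ∉ Set.Icc (0:ℝ) 1} with hN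
    have hNnull : μ N = 0 := measure_iUnion_null fun j => margNull_notIcc (hμm j)
    have h1 : A \ N ⊆ box (Function.extend e x (fun _ => 1)) := by
      rintro y ⟨hyA', hyN⟩
      have hyA : y ∈ A := hyA'
      rw [Set.mem_preimage] at hyA
      rw [mem_box]
      intro j
      by_cases hj : ∃ k, e k = j
      · obtain ⟨k, rfl⟩ := hj
        rw [he.extend_apply]
        exact mem_box.mp hyA k
      · rw [Function.extend_apply' _ _ _ hj]
        by_contra hc
        exact hyN (Set.mem_iUnion.mpr ⟨j, hc⟩)
    have h2 : box (Function.extend e x (fun _ => 1)) ⊆ A := by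
      intro y hy
      rw [Set.mem_preimage, mem_box]
      intro k
      have := mem_box.mp hy (e k)
      rwa [he.extend_apply] at this
    refine le_antisymm (measure_mono h2) ?_
    calc μ A = μ (A \ N) := (measure_diff_null hNnull).symm
    _ ≤ _ := measure_mono h1
  · intro k
    rw [Measure.map_map (measurable_pi_apply k) hF]
    exact hμm (e k)

end Chunk2

-- ===== chunk 3: reflTrans algebra =====
section Chunk3
variable {n m : ℕ}

lemma reflTrans_empty (C : (Fin n → ℝ) → ℝ) : reflTrans ∅ C = C := by
  funext x
  unfold reflTrans
  rw [Finset.powerset_empty, Finset.sum_singleton]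
  simp

lemma reflTrans_insert {S : Finset (Fin n)} {i : Fin n} (hi : i ∉ S)
    (C : (Fin n → ℝ) → ℝ) (x : Fin n → ℝ) :
    reflTrans (insert i S) C x =
      reflTrans S C (fun j => if j = i then 1 else x j) -
      reflTrans S C (fun j => if j = i then 1 - x i else x j) := by
  unfold reflTrans
  rw [Finset.sum_powerset_insert hi]
  have h1 : ∀ T ∈ S.powerset,
      (-1:ℝ) ^ T.card * C (fun j => if j ∈ T then 1 - x j else if j ∈ insert i S then 1 else x j)
      = (-1:ℝ) ^ T.card * C (fun j => if j ∈ T then 1 - (if j = i then (1:ℝ) else x j)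
          else if j ∈ S then 1 else if j = i then 1 else x j) := by
    intro T hT
    have hTS := Finset.mem_powerset.mp hT
    congr 1
    congr 1
    funext j
    by_cases hji : j = i
    · subst hji
      have hjT : j ∉ T := fun h => hi (hTS h)
      simp [hjT, hi, Finset.mem_insert_self]
    · by_cases hjT : j ∈ T
      · simp [hjT, hji]
      · by_cases hjS : j ∈ S
        · simp [hjT, hjS, hji, Finset.mem_insert.mpr (Or.inr hjS)]
        · simp [hjT, hjS, hji, Finset.mem_insert]
  have h2 : ∀ T ∈ S.powerset,
      (-1:ℝ) ^ (insert i T).card *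
        C (fun j => if j ∈ insert i T then 1 - x j else if j ∈ insert i S then 1 else x j)
      = -((-1:ℝ) ^ T.card * C (fun j => if j ∈ T then 1 - (if j = i then 1 - x i else x j)
          else if j ∈ S then 1 else if j = i then 1 - x i else x j)) := by
    intro T hT
    have hTS := Finset.mem_powerset.mp hT
    have hiT : i ∉ T := fun h => hi (hTS h)
    rw [Finset.card_insert_of_notMem hiT, pow_succ]
    have harg : (fun j => if j ∈ insert i T then 1 - x j else if j ∈ insert i S then 1 else x j)
        = (fun j => if j ∈ T then 1 - (if j = i then 1 - x i else x j)
          else if j ∈ S then 1 else if j = i then 1 - x i else x j) := by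
      funext j
      by_cases hji : j = i
      · subst hji
        simp [hiT, hi, Finset.mem_insert_self]
      · by_cases hjT : j ∈ T
        · simp [hjT, hji, Finset.mem_insert.mpr (Or.inr hjT)]
        · by_cases hjS : j ∈ S
          · simp [hjT, hji, hjS, Finset.mem_insert, Finset.mem_insert.mpr (Or.inr hjS)]
          · simp [hjT, hji, hjS, Finset.mem_insert]
    rw [harg]
    ring
  rw [Finset.sum_congr rfl h1, Finset.sum_congr rfl h2, Finset.sum_neg_distrib]
  ring

lemma reflTrans_singleton (C : (Fin n → ℝ) → ℝ) (i : Fin n) (x : Fin n → ℝ) :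
    reflTrans {i} C x =
      C (fun j => if j = i then 1 else x j) - C (fun j => if j = i then 1 - x i else x j) := by
  have h := reflTrans_insert (S := ∅) (Finset.notMem_empty i) C x
  have he : (insert i ∅ : Finset (Fin n)) = {i} := rfl
  rw [he] at h
  rw [h, reflTrans_empty]

lemma reflTrans_insert_eq {S : Finset (Fin n)} {i : Fin n} (hi : i ∉ S)
    (C : (Fin n → ℝ) → ℝ) :
    reflTrans (insert i S) C = reflTrans {i} (reflTrans S C) := by
  funext x
  rw [reflTrans_insert hi C x, reflTrans_singleton]

end Chunk3

-- ===== chunk 4: copula closure =====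
section Chunk4
variable {n m : ℕ}

lemma volume_Icc_map_one_sub :
    (volume.restrict (Set.Icc (0:ℝ) 1)).map (fun x => 1 - x) = volume.restrict (Set.Icc (0:ℝ) 1) := by
  have h : MeasurePreserving (fun x : ℝ => 1 - x) volume volume :=
    Measure.measurePreserving_sub_left volume 1
  have hpre : (fun x : ℝ => 1 - x) ⁻¹' (Set.Icc 0 1) = Set.Icc 0 1 := by
    ext x
    simp only [Set.mem_preimage, Set.mem_Icc]
    constructor <;> (intro ⟨a, b⟩; constructor <;> linarith)
  have := h.restrict_preimage (measurableSet_Icc : MeasurableSet (Set.Icc (0:ℝ) 1))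
  rw [hpre] at this
  exact this.map_eq

lemma box_split (x : Fin n → ℝ) (i : Fin n) (c : ℝ) :
    box (fun j => if j = i then c else x j) =
      {y : Fin n → ℝ | ∀ j, j ≠ i → y j ∈ Set.Icc 0 (x j)} ∩ {y | y i ∈ Set.Icc 0 c} := by
  ext y
  simp only [mem_box, Set.mem_inter_iff, Set.mem_setOf_eq]
  constructor
  · intro h
    refine ⟨fun j hj => by simpa [hj] using h j, by simpa using h i⟩
  · rintro ⟨h1, h2⟩ j
    by_cases hj : j = i
    · subst hj; simpa using h2
    · simpa [hj] using h1 j hj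

lemma isCopula_reflTrans_singleton {C : (Fin n → ℝ) → ℝ} (hC : IsCopula C) (i : Fin n) :
    IsCopula (reflTrans {i} C) := by
  obtain ⟨μ, hμp, hμb, hμm⟩ := hC
  set ρ : (Fin n → ℝ) → (Fin n → ℝ) := fun y j => if j = i then 1 - y i else y j with hρ
  have hρm : Measurable ρ := by
    refine measurable_pi_lambda _ fun j => ?_
    simp only [hρ]
    by_cases h : j = i
    · simp only [if_pos h]
      exact measurable_const.sub (measurable_pi_apply i)
    · simp only [if_neg h]
      exact measurable_pi_apply j
  refine ⟨μ.map ρ, Measure.isProbabilityMeasure_map hρm.aemeasurable, ?_, ?_⟩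
  · intro x hx
    have hx' := mem_cube.mp hx
    have hxi0 : (0:ℝ) ≤ 1 - x i := by linarith [(hx' i).2]
    have hxi1 : 1 - x i ≤ 1 := by linarith [(hx' i).1]
    set R : Set (Fin n → ℝ) := {y | ∀ j, j ≠ i → y j ∈ Set.Icc 0 (x j)} with hR
    have hpre : ρ ⁻¹' box x = R ∩ {y | y i ∈ Set.Icc (1 - x i) 1} := by
      ext y
      simp only [Set.mem_preimage, mem_box, Set.mem_inter_iff, Set.mem_setOf_eq, hR]
      constructor
      · intro h
        constructor
        · intro j hj
          have := h j
          simpa [hρ, hj] using this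
        · have := h i
          simp only [hρ, if_pos, Set.mem_Icc] at this
          exact ⟨by linarith [this.2], by linarith [this.1]⟩
      · rintro ⟨h1, h2⟩ j
        by_cases hj : j = i
        · subst hj
          simp only [hρ, if_pos, Set.mem_Icc]
          simp only [Set.mem_Icc] at h2
          exact ⟨by linarith [h2.2], by linarith [h2.1]⟩
        · simpa [hρ, hj] using h1 j hj
    have hu1 : box (fun j => if j = i then (1:ℝ) else x j) = R ∩ {y | y i ∈ Set.Icc (0:ℝ) 1} :=
      box_split x i 1
    have hu2 : box (fun j => if j = i then 1 - x i else x j) =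
        R ∩ {y | y i ∈ Set.Icc (0:ℝ) (1 - x i)} := box_split x i (1 - x i)
    have hadd : μ (box (fun j => if j = i then 1 - x i else x j)) + μ (ρ ⁻¹' box x)
        = μ (box (fun j => if j = i then (1:ℝ) else x j)) := by
      have hun : box (fun j => if j = i then 1 - x i else x j) ∪ ρ ⁻¹' box x
          = box (fun j => if j = i then (1:ℝ) else x j) := by
        rw [hu1, hu2, hpre, ← Set.inter_union_distrib_left]
        congr 1
        ext y
        simp only [Set.mem_union, Set.mem_setOf_eq]
        rw [← Set.mem_union, Set.Icc_union_Icc_eq_Icc hxi0 hxi1]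
      have hint : μ (box (fun j => if j = i then 1 - x i else x j) ∩ ρ ⁻¹' box x) = 0 := by
        refine le_antisymm (le_trans (measure_mono ?_) (margNull_eq (hμm i) (1 - x i)).le)
          zero_le
        rw [hu2, hpre]
        rintro y ⟨⟨_, h2⟩, ⟨_, h4⟩⟩
        simp only [Set.mem_setOf_eq, Set.mem_Icc] at h2 h4 ⊢
        linarith [h2.2, h4.1]
      have := measure_union_add_inter (μ := μ)
        (box (fun j => if j = i then 1 - x i else x j)) (hρm (measurableSet_box x))
      rw [hun, hint, add_zero] at this
      exact this.symm
    rw [reflTrans_singleton]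
    have hc1 : (fun j => if j = i then (1:ℝ) else x j) ∈ cube n := by
      rw [mem_cube]; intro j
      by_cases hj : j = i
      · simp only [if_pos hj]
        exact ⟨zero_le_one, le_refl 1⟩
      · simp only [if_neg hj]
        exact hx' j
    have hc2 : (fun j => if j = i then 1 - x i else x j) ∈ cube n := by
      rw [mem_cube]; intro j
      by_cases hj : j = i
      · simp only [if_pos hj]
        exact ⟨hxi0, hxi1⟩
      · simp only [if_neg hj]
        exact hx' j
    rw [hμb _ hc1, hμb _ hc2]
    rw [Measure.map_apply hρm (measurableSet_box x)]
    rw [← hadd, ENNReal.toReal_add (measure_ne_top μ _) (measure_ne_top μ _)]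
    ring
  · intro j
    have : Measurable fun y : Fin n → ℝ => y j := measurable_pi_apply j
    rw [Measure.map_map this hρm]
    by_cases hj : j = i
    · subst hj
      have hcomp : ((fun y : Fin n → ℝ => y j) ∘ ρ) = (fun t => 1 - t) ∘ (fun y => y j) := by
        funext y; simp [hρ]
      have hg : Measurable fun t : ℝ => 1 - t := measurable_const.sub measurable_id
      rw [hcomp, ← Measure.map_map hg (measurable_pi_apply j), hμm j, volume_Icc_map_one_sub]
    · have hcomp : ((fun y : Fin n → ℝ => y j) ∘ ρ) = (fun y : Fin n → ℝ => y j) := by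
        funext y; simp [hρ, hj]
      rw [hcomp]
      exact hμm j

lemma isCopula_reflTrans {C : (Fin n → ℝ) → ℝ} (hC : IsCopula C) (S : Finset (Fin n)) :
    IsCopula (reflTrans S C) := by
  induction S using Finset.induction with
  | empty => rw [reflTrans_empty]; exact hC
  | insert _ _ hi ih =>
      rw [reflTrans_insert_eq hi]
      exact isCopula_reflTrans_singleton ih _

lemma permTrans_eq_extend (τ : Equiv.Perm (Fin n)) (C : (Fin n → ℝ) → ℝ) :
    permTrans τ C = fun x => C (Function.extend ⇑τ.symm x (fun _ => 1)) := by
  funext x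
  unfold permTrans
  congr 1
  funext j
  have : Function.extend ⇑τ.symm x (fun _ => (1:ℝ)) (τ.symm (τ j)) = x (τ j) :=
    Function.Injective.extend_apply τ.symm.injective _ _ _
  simpa using this.symm

lemma isCopula_permTrans {C : (Fin n → ℝ) → ℝ} (hC : IsCopula C) (τ : Equiv.Perm (Fin n)) :
    IsCopula (permTrans τ C) := by
  rw [permTrans_eq_extend]
  exact isCopula_comp hC _ τ.symm.injective

/-- The canonical order embedding of `Fin Pᶜ.card` into `Fin n`. -/
def oeC {n : ℕ} (P : Finset (Fin n)) : Fin (Pᶜ.card) → Fin n :=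
  fun k => ((Pᶜ.orderIsoOfFin rfl) k : Fin n)

lemma oeC_mem (P : Finset (Fin n)) (k : Fin (Pᶜ.card)) : oeC P k ∈ Pᶜ :=
  ((Pᶜ.orderIsoOfFin rfl) k).2

lemma oeC_inj (P : Finset (Fin n)) : Function.Injective (oeC P) := by
  intro a b h
  have := Subtype.ext h (p := fun x => x ∈ Pᶜ)
  exact (Pᶜ.orderIsoOfFin rfl).injective this

lemma oeC_range (P : Finset (Fin n)) (j : Fin n) : (∃ k, oeC P k = j) ↔ j ∈ Pᶜ := by
  constructor
  · rintro ⟨k, rfl⟩; exact oeC_mem P k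
  · intro h
    exact ⟨(Pᶜ.orderIsoOfFin rfl).symm ⟨j, h⟩, by simp [oeC]⟩

lemma properMarg_eq_extend (C : (Fin n → ℝ) → ℝ) (P : Finset (Fin n)) :
    properMarg C P = fun y => C (Function.extend (oeC P) y (fun _ => 1)) := by
  funext y
  unfold properMarg
  congr 1
  funext j
  by_cases h : j ∈ Pᶜ
  · rw [dif_pos h]
    have hj : oeC P ((Pᶜ.orderIsoOfFin rfl).symm ⟨j, h⟩) = j := by simp [oeC]
    conv_rhs => rw [← hj]
    rw [Function.Injective.extend_apply (oeC_inj P)]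
  · rw [dif_neg h]
    rw [Function.extend_apply' _ _ _ (fun hc => h ((oeC_range P j).mp hc))]

lemma isCopula_properMarg {C : (Fin n → ℝ) → ℝ} (hC : IsCopula C) (P : Finset (Fin n)) :
    IsCopula (properMarg C P) := by
  rw [properMarg_eq_extend]
  exact isCopula_comp hC _ (oeC_inj P)

end Chunk4

-- ===== chunk 5: marginals =====
section Chunk5
variable {n m : ℕ}

/-- `κ_j(C_P)`. -/
def mrg (κ : ConcordanceMeasure) {n : ℕ} (C : (Fin n → ℝ) → ℝ) (P : Finset (Fin n)) : ℝ :=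
  κ.κ (Pᶜ.card) (properMarg C P)

lemma mrg_spec (κ : ConcordanceMeasure) {C : (Fin n → ℝ) → ℝ} (hC : IsCopula C)
    (P : Finset (Fin n)) {e : Fin m → Fin n} (he : Function.Injective e)
    (hrange : ∀ j, (∃ k, e k = j) ↔ j ∈ Pᶜ) {D : (Fin m → ℝ) → ℝ} (hD : IsCopula D)
    (hDC : ∀ x ∈ cube m, D x = C (Function.extend e x fun _ => 1)) :
    κ.κ m D = mrg κ C P := by
  have hcard : m = Pᶜ.card := by
    have himg : Finset.univ.image e = Pᶜ := by
      ext j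
      simp only [Finset.mem_image, Finset.mem_univ, true_and]
      exact hrange j
    calc m = (Finset.univ : Finset (Fin m)).card := (Finset.card_fin m).symm
    _ = (Finset.univ.image e).card := (Finset.card_image_of_injective _ he).symm
    _ = Pᶜ.card := by rw [himg]
  subst hcard
  by_cases h2 : 2 ≤ Pᶜ.card
  · have hinj : Function.Injective
        (fun k : Fin (Pᶜ.card) => (⟨e k, (hrange _).mp ⟨k, rfl⟩⟩ : {j // j ∈ Pᶜ})) := by
      intro a b hab
      exact he (congrArg Subtype.val hab)
    have hbij : Function.Bijective
        (fun k : Fin (Pᶜ.card) => (⟨e k, (hrange _).mp ⟨k, rfl⟩⟩ : {j // j ∈ Pᶜ})) := by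
      rw [Fintype.bijective_iff_injective_and_card]
      exact ⟨hinj, by simp only [Fintype.card_coe, Fintype.card_fin]⟩
    set ψ := Equiv.ofBijective _ hbij with hψ
    set φ := (Pᶜ.orderIsoOfFin rfl).toEquiv with hφ
    set π := φ.trans ψ.symm with hπ
    have key : ∀ x ∈ cube (Pᶜ.card), D x = permTrans π (properMarg C P) x := by
      intro x hx
      rw [hDC x hx]
      unfold permTrans
      rw [properMarg_eq_extend]
      congr 1
      funext j
      by_cases h : j ∈ Pᶜ
      · obtain ⟨k₀, hk₀⟩ := (hrange j).mpr h
        have h1 : Function.extend e x (fun _ => (1:ℝ)) j = x k₀ := by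
          rw [← hk₀, he.extend_apply]
        have hoe : oeC P (φ.symm ⟨j, h⟩) = j := by
          simp [oeC, hφ]
        have h2' : Function.extend (oeC P) (fun k => x (π k)) (fun _ => (1:ℝ)) j
            = x (π (φ.symm ⟨j, h⟩)) := by
          conv_lhs => rw [← hoe]
          rw [Function.Injective.extend_apply (oeC_inj P)]
        rw [h1, h2']
        congr 1
        have : ψ (π (φ.symm ⟨j, h⟩)) = ⟨j, h⟩ := by
          simp [hπ]
        have h3 : e (π (φ.symm ⟨j, h⟩)) = j := congrArg Subtype.val this
        exact (he (by rw [h3, hk₀])).symm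
      · rw [Function.extend_apply' _ _ _ (fun hc => h ((hrange j).mp hc)),
          Function.extend_apply' _ _ _ (fun hc => h ((oeC_range P j).mp hc))]
    have hPM := isCopula_properMarg hC P
    calc κ.κ Pᶜ.card D = κ.κ Pᶜ.card (permTrans π (properMarg C P)) :=
          kappa_congr κ h2 hD (isCopula_permTrans hPM π) key
    _ = κ.κ Pᶜ.card (properMarg C P) := κ.permInv _ h2 _ hPM π
    _ = mrg κ C P := rfl
  · push_neg at h2
    rw [kappa_le_one κ (by omega) D]
    rw [mrg, kappa_le_one κ (by omega) _]

lemma mrg_empty (κ : ConcordanceMeasure) {C : (Fin n → ℝ) → ℝ} (hC : IsCopula C) :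
    mrg κ C (∅ : Finset (Fin n)) = κ.κ n C := by
  refine (mrg_spec κ hC ∅ (e := id) Function.injective_id ?_ hC ?_).symm
  · intro j
    simp
  · intro x _
    congr 1
    funext j
    exact (Function.injective_id.extend_apply x (fun _ => (1:ℝ)) j).symm

lemma mrg_marg (κ : ConcordanceMeasure) {C : (Fin n → ℝ) → ℝ} (hC : IsCopula C)
    (i : Fin n) (Q : Finset (Fin (({i} : Finset (Fin n))ᶜ.card))) :
    mrg κ (properMarg C ({i} : Finset (Fin n))) Q
      = mrg κ C (insert i (Q.image (oeC ({i} : Finset (Fin n))))) := by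
  have heii := oeC_inj ({i} : Finset (Fin n))
  have heiQ := oeC_inj Q
  have hcomp : Function.Injective (fun k => oeC ({i} : Finset (Fin n)) (oeC Q k)) :=
    fun a b hab => heiQ (heii hab)
  have hne : ∀ k, oeC ({i} : Finset (Fin n)) k ≠ i := by
    intro k hk
    have h := oeC_mem ({i} : Finset (Fin n)) k
    rw [hk] at h
    simp at h
  refine mrg_spec κ hC _ (e := fun k => oeC ({i} : Finset (Fin n)) (oeC Q k)) hcomp ?_
    (isCopula_properMarg (isCopula_properMarg hC _) Q) ?_
  · intro j
    constructor
    · rintro ⟨k, rfl⟩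
      rw [Finset.mem_compl, Finset.mem_insert]
      push_neg
      refine ⟨hne _, ?_⟩
      intro hj
      rw [Finset.mem_image] at hj
      obtain ⟨q, hq, hq2⟩ := hj
      have hqk : q = oeC Q k := heii hq2
      rw [hqk] at hq
      have h := oeC_mem Q k
      rw [Finset.mem_compl] at h
      exact h hq
    · intro hj
      rw [Finset.mem_compl, Finset.mem_insert] at hj
      push_neg at hj
      obtain ⟨hj1, hj2⟩ := hj
      have hji : j ∈ ({i} : Finset (Fin n))ᶜ := by simp [hj1]
      obtain ⟨a, ha⟩ := (oeC_range _ j).mpr hji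
      have haQ : a ∈ Qᶜ := by
        rw [Finset.mem_compl]
        intro haQ'
        exact hj2 (Finset.mem_image.mpr ⟨a, haQ', ha⟩)
      obtain ⟨k, hk⟩ := (oeC_range Q a).mpr haQ
      exact ⟨k, by show oeC ({i} : Finset (Fin n)) (oeC Q k) = j; rw [hk]; exact ha⟩
  · intro x _
    rw [properMarg_eq_extend, properMarg_eq_extend]
    show C (Function.extend (oeC ({i} : Finset (Fin n)))
        (Function.extend (oeC Q) x fun _ => 1) fun _ => (1:ℝ)) = _
    congr 1
    funext j
    by_cases h : ∃ a, oeC ({i} : Finset (Fin n)) a = j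
    · obtain ⟨a, rfl⟩ := h
      rw [heii.extend_apply]
      by_cases hq : ∃ k, oeC Q k = a
      · obtain ⟨k, rfl⟩ := hq
        rw [heiQ.extend_apply]
        exact (hcomp.extend_apply x _ k).symm
      · rw [Function.extend_apply' _ _ _ hq]
        have hq2 : ¬ ∃ k, (fun k => oeC ({i} : Finset (Fin n)) (oeC Q k)) k
            = oeC ({i} : Finset (Fin n)) a := fun ⟨k, hk⟩ => hq ⟨k, heii hk⟩
        rw [Function.extend_apply' _ _ _ hq2]
    · rw [Function.extend_apply' _ _ _ h]
      have h2 : ¬ ∃ k, (fun k => oeC ({i} : Finset (Fin n)) (oeC Q k)) k = j :=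
        fun ⟨k, hk⟩ => h ⟨oeC Q k, hk⟩
      rw [Function.extend_apply' _ _ _ h2]

end Chunk5

-- ===== chunk 6: transition at a coordinate =====
section Chunk6

lemma trans_at (κ : ConcordanceMeasure) {nn m : ℕ} (hm : 2 ≤ m) (hmn : m + 1 = nn)
    {E : (Fin nn → ℝ) → ℝ} (hE : IsCopula E) (i : Fin nn)
    {e : Fin m → Fin nn} (he : Function.Injective e)
    (hri : ∀ j, (∃ k, e k = j) ↔ j ≠ i)
    {D : (Fin m → ℝ) → ℝ} (hD : IsCopula D)
    (hmarg : ∀ x ∈ cube m, D x = E (Function.extend e x fun _ => 1)) :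
    κ.r m * κ.κ m D = κ.κ nn E + κ.κ nn (reflTrans {i} E) := by
  subst hmn
  set τ : Equiv.Perm (Fin (m+1)) := Equiv.swap 0 i with hτ
  have hτi : τ i = 0 := Equiv.swap_apply_right 0 i
  have hτ0 : ∀ j, τ j = 0 ↔ j = i := by
    intro j
    rw [← hτi]
    exact τ.injective.eq_iff
  set E' := permTrans τ E with hE'def
  have hE'c : IsCopula E' := isCopula_permTrans hE τ
  set C₀ : (Fin m → ℝ) → ℝ := fun x => E' (fun j : Fin (m+1) =>
      if h : (j : ℕ) = 0 then 1 else x ⟨(j : ℕ) - 1, by have := j.isLt; omega⟩) with hC₀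
  have hek : ∀ k, e k ≠ i := fun k => (hri (e k)).mp ⟨k, rfl⟩
  have hτek : ∀ k, τ (e k) ≠ 0 := fun k h => hek k ((hτ0 (e k)).mp h)
  set g : Fin m → Fin m := fun k => ⟨(τ (e k) : ℕ) - 1, by have := (τ (e k)).isLt; omega⟩
    with hg
  have hgval : ∀ k, (τ (e k) : ℕ) ≠ 0 := by
    intro k h
    exact hτek k (Fin.ext h)
  have hginj : Function.Injective g := by
    intro a b hab
    have h1 := congrArg Fin.val hab
    simp only [hg] at h1
    have := hgval a
    have := hgval b
    have : (τ (e a) : ℕ) = (τ (e b) : ℕ) := by omega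
    exact he (τ.injective (Fin.ext this))
  set gE : Equiv.Perm (Fin m) := Equiv.ofBijective g (Finite.injective_iff_bijective.mp hginj)
    with hgE
  have hagree : ∀ x ∈ cube m, permTrans gE D x = C₀ x := by
    intro x hx
    have hxg : (fun k => x (gE k)) ∈ cube m := by
      rw [mem_cube]
      intro k
      exact mem_cube.mp hx _
    unfold permTrans
    rw [hmarg _ hxg, hC₀]
    show E _ = E' _
    rw [hE'def]
    unfold permTrans
    congr 1
    funext j
    by_cases hji : j = i
    · subst hji
      rw [Function.extend_apply' _ _ _ (fun hc => (hri j).mp hc rfl)]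
      have h0 : ((τ j : Fin (m+1)) : ℕ) = 0 := by rw [hτi]; rfl
      beta_reduce
      rw [dif_pos h0]
    · obtain ⟨k, rfl⟩ := (hri j).mpr hji
      rw [he.extend_apply]
      beta_reduce
      rw [dif_neg (hgval k)]
      rfl
  have hC₀c : IsCopula C₀ := isCopula_congr (isCopula_permTrans hD gE) hagree
  have htr := κ.transition m hm C₀ E' hC₀c hE'c (fun x _ => rfl)
  have h2m1 : 2 ≤ m + 1 := by omega
  have hrefl : reflTrans {(0 : Fin (m+1))} E' = permTrans τ (reflTrans {i} E) := by
    funext x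
    show reflTrans {(0 : Fin (m+1))} E' x = reflTrans {i} E (fun j => x (τ j))
    rw [reflTrans_singleton, reflTrans_singleton]
    rw [hE'def]
    unfold permTrans
    congr 2
    · funext j
      beta_reduce
      by_cases hji : j = i
      · subst hji
        simp [hτi]
      · simp [hτ0 j, hji]
    · funext j
      beta_reduce
      by_cases hji : j = i
      · subst hji
        simp [hτi]
      · simp [hτ0 j, hji]
  have e1 : κ.κ m C₀ = κ.κ m D := by
    rw [← (kappa_congr κ hm (isCopula_permTrans hD gE) hC₀c hagree)]
    exact κ.permInv m hm D hD gE
  have e2 : κ.κ (m+1) E' = κ.κ (m+1) E := κ.permInv (m+1) h2m1 E hE τ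
  have e3 : κ.κ (m+1) (reflTrans {(0 : Fin (m+1))} E') = κ.κ (m+1) (reflTrans {i} E) := by
    rw [hrefl]
    exact κ.permInv (m+1) h2m1 _ (isCopula_reflTrans_singleton hE i) τ
  rw [e1, e2, e3] at htr
  exact htr

end Chunk6

-- ===== chunk 7: dimension 2 =====
section Chunk7

lemma refl_eval0 (C : (Fin 2 → ℝ) → ℝ) (x : Fin 2 → ℝ) :
    reflTrans {0} C x = C ![1, x 1] - C ![1 - x 0, x 1] := by
  rw [reflTrans_singleton]
  congr 1 <;> congr 1 <;> funext j <;> fin_cases j <;> simp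

lemma refl_eval1 (C : (Fin 2 → ℝ) → ℝ) (x : Fin 2 → ℝ) :
    reflTrans {1} C x = C ![x 0, 1] - C ![x 0, 1 - x 1] := by
  rw [reflTrans_singleton]
  congr 1 <;> congr 1 <;> funext j <;> fin_cases j <;> simp

lemma vec_mem_cube {a b : ℝ} (ha : a ∈ Set.Icc (0:ℝ) 1) (hb : b ∈ Set.Icc (0:ℝ) 1) :
    ![a, b] ∈ cube 2 := by
  rw [mem_cube]
  intro j
  fin_cases j <;> simpa

lemma univ_refl0 {C : (Fin 2 → ℝ) → ℝ} (hC : IsCopula C) :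
    ∀ x ∈ cube 2, reflTrans Finset.univ (reflTrans {0} C) x = reflTrans {1} C x := by
  intro x hx
  have hx' := mem_cube.mp hx
  have hu : (Finset.univ : Finset (Fin 2)) = insert 0 {1} := by decide
  have h01 : (0 : Fin 2) ∉ ({1} : Finset (Fin 2)) := by decide
  rw [hu, reflTrans_insert h01]
  rw [refl_eval1, refl_eval1]
  have hif0 : ∀ a b : ℝ, (if (0 : Fin 2) = 0 then a else b) = a := fun a b => if_pos rfl
  have hif1 : ∀ a b : ℝ, (if (1 : Fin 2) = 0 then a else b) = b :=
    fun a b => if_neg (by decide)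
  simp only [hif0, hif1, if_true, if_false]
  rw [refl_eval0, refl_eval0, refl_eval0, refl_eval0]
  simp only [Matrix.cons_val_zero, Matrix.cons_val_one, Matrix.head_cons]
  have hz1 : (1:ℝ) - 1 = 0 := by ring
  have hz2 : 1 - (1 - x 0) = x 0 := by ring
  rw [hz1, hz2]
  have hxc1 : (0:ℝ) ≤ 1 - x 1 := by linarith [(hx' 1).2]
  have hxc2 : 1 - x 1 ≤ 1 := by linarith [(hx' 1).1]
  have c1 : C ![0, 1] = 0 := copula_zero hC
    (vec_mem_cube (by norm_num) (by norm_num)) (i := 0) (by simp)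
  have c2 : C ![0, 1 - x 1] = 0 := copula_zero hC
    (vec_mem_cube (by norm_num) ⟨hxc1, hxc2⟩) (i := 0) (by simp)
  rw [c1, c2]
  rw [refl_eval1]
  ring

lemma kappa_refl_single_two (κ : ConcordanceMeasure) {C : (Fin 2 → ℝ) → ℝ}
    (hC : IsCopula C) (i : Fin 2) :
    κ.κ 2 (reflTrans {i} C) = - κ.κ 2 C := by
  have h2 : (2:ℕ) ≤ 2 := le_refl 2
  have hs0 : IsCopula (reflTrans {(0 : Fin 2)} C) := isCopula_reflTrans_singleton hC 0
  have hs1 : IsCopula (reflTrans {(1 : Fin 2)} C) := isCopula_reflTrans_singleton hC 1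
  have heq01 : κ.κ 2 (reflTrans {(0 : Fin 2)} C) = κ.κ 2 (reflTrans {(1 : Fin 2)} C) := by
    have hd := κ.duality 2 h2 _ hs0
    have hcong := kappa_congr κ h2 (isCopula_reflTrans hs0 Finset.univ)
      (B := reflTrans {(1 : Fin 2)} C) hs1 (univ_refl0 hC)
    rw [← hd, hcong]
  have hrsp := κ.rsp 2 h2 C hC
  have henum : (Finset.univ : Finset (Finset (Fin 2)))
      = {∅, {0}, {1}, Finset.univ} := by decide
  rw [henum] at hrsp
  have hne1 : (∅ : Finset (Fin 2)) ∉ ({{0}, {1}, Finset.univ} : Finset (Finset (Fin 2))) := by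
    decide
  have hne2 : ({0} : Finset (Fin 2)) ∉ ({{1}, Finset.univ} : Finset (Finset (Fin 2))) := by
    decide
  have hne3 : ({1} : Finset (Fin 2)) ∉ ({Finset.univ} : Finset (Finset (Fin 2))) := by decide
  rw [show ({∅, {0}, {1}, Finset.univ} : Finset (Finset (Fin 2)))
      = insert ∅ (insert {0} (insert {1} {Finset.univ})) from rfl] at hrsp
  rw [Finset.sum_insert hne1, Finset.sum_insert hne2, Finset.sum_insert hne3,
    Finset.sum_singleton] at hrsp
  rw [reflTrans_empty] at hrsp
  rw [κ.duality 2 h2 C hC] at hrsp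
  rw [← heq01] at hrsp
  have hval : κ.κ 2 (reflTrans {(0 : Fin 2)} C) = - κ.κ 2 C := by linarith
  obtain ⟨iv, hiv⟩ := i
  interval_cases iv
  · exact hval
  · calc κ.κ 2 (reflTrans {(1 : Fin 2)} C) = κ.κ 2 (reflTrans {(0 : Fin 2)} C) := heq01.symm
    _ = - κ.κ 2 C := hval

end Chunk7

-- ===== chunk 8: powerset reindexing =====
section Chunk8
variable {α β : Type*} [DecidableEq α] [DecidableEq β]

lemma image_filter_mem {e : α → β} (A : Finset α) {T : Finset β}
    (hT : T ⊆ A.image e) : (A.filter (fun a => e a ∈ T)).image e = T := by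
  ext b
  simp only [Finset.mem_image, Finset.mem_filter]
  constructor
  · rintro ⟨a, ⟨_, haT⟩, rfl⟩
    exact haT
  · intro hb
    obtain ⟨a, haA, rfl⟩ := Finset.mem_image.mp (hT hb)
    exact ⟨a, ⟨haA, hb⟩, rfl⟩

lemma sum_powerset_image {e : α → β} (he : Function.Injective e) (A : Finset α)
    (f : Finset β → ℝ) :
    ∑ Q ∈ A.powerset, f (Q.image e) = ∑ P ∈ (A.image e).powerset, f P := by
  refine Finset.sum_bij (fun Q _ => Q.image e) ?_ ?_ ?_ ?_
  · intro Q hQ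
    rw [Finset.mem_powerset] at hQ ⊢
    exact Finset.image_subset_image hQ
  · intro a ha b hb hab
    exact Finset.image_injective he hab
  · intro P hP
    rw [Finset.mem_powerset] at hP
    exact ⟨A.filter (fun a => e a ∈ P), Finset.mem_powerset.mpr (Finset.filter_subset _ _),
      image_filter_mem A hP⟩
  · intro Q hQ
    rfl

lemma sum_powersetCard_image {e : α → β} (he : Function.Injective e) (A : Finset α) (k : ℕ)
    (f : Finset β → ℝ) :
    ∑ Q ∈ A.powersetCard k, f (Q.image e) = ∑ P ∈ (A.image e).powersetCard k, f P := by
  refine Finset.sum_bij (fun Q _ => Q.image e) ?_ ?_ ?_ ?_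
  · intro Q hQ
    rw [Finset.mem_powersetCard] at hQ ⊢
    exact ⟨Finset.image_subset_image hQ.1, by rw [Finset.card_image_of_injective _ he]; exact hQ.2⟩
  · intro a ha b hb hab
    exact Finset.image_injective he hab
  · intro P hP
    rw [Finset.mem_powersetCard] at hP
    refine ⟨A.filter (fun a => e a ∈ P), ?_, image_filter_mem A hP.1⟩
    rw [Finset.mem_powersetCard]
    refine ⟨Finset.filter_subset _ _, ?_⟩
    have := image_filter_mem A hP.1
    rw [← Finset.card_image_of_injective (A.filter (fun a => e a ∈ P)) he, this, hP.2]
  · intro Q hQ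
    rfl

end Chunk8

-- ===== chunk 8b: margin-reflection identity =====
section Chunk8b
variable {n : ℕ}

lemma refl_marg_id (C : (Fin n → ℝ) → ℝ) (i : Fin n) (S' : Finset (Fin n))
    (S'' : Finset (Fin (({i} : Finset (Fin n))ᶜ.card)))
    (hS'' : S''.image (oeC ({i} : Finset (Fin n))) = S')
    (x : Fin (({i} : Finset (Fin n))ᶜ.card) → ℝ) :
    reflTrans S'' (properMarg C ({i} : Finset (Fin n))) x
      = reflTrans S' C (Function.extend (oeC ({i} : Finset (Fin n))) x fun _ => 1) := by
  have he := oeC_inj ({i} : Finset (Fin n))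
  conv_rhs => rw [← hS'']
  show _ = reflTrans (S''.image (oeC ({i} : Finset (Fin n)))) C
      (Function.extend (oeC ({i} : Finset (Fin n))) x fun _ => 1)
  unfold reflTrans
  rw [← sum_powerset_image he S'']
  apply Finset.sum_congr rfl
  intro Q hQ
  have hQS := Finset.mem_powerset.mp hQ
  rw [Finset.card_image_of_injective _ he]
  congr 1
  rw [properMarg_eq_extend]
  show C _ = C _
  congr 1
  funext j
  by_cases hj : ∃ k, oeC ({i} : Finset (Fin n)) k = j
  · obtain ⟨k, rfl⟩ := hj
    rw [he.extend_apply]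
    have him1 : oeC ({i} : Finset (Fin n)) k ∈ Q.image (oeC ({i} : Finset (Fin n))) ↔ k ∈ Q := by
      constructor
      · intro h
        obtain ⟨a, ha, hae⟩ := Finset.mem_image.mp h
        rwa [← he hae]
      · exact fun h => Finset.mem_image_of_mem _ h
    have him2 : oeC ({i} : Finset (Fin n)) k ∈ S''.image (oeC ({i} : Finset (Fin n))) ↔ k ∈ S'' := by
      constructor
      · intro h
        obtain ⟨a, ha, hae⟩ := Finset.mem_image.mp h
        rwa [← he hae]
      · exact fun h => Finset.mem_image_of_mem _ h
    by_cases hkQ : k ∈ Q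
    · rw [if_pos hkQ, if_pos (him1.mpr hkQ), he.extend_apply]
    · rw [if_neg hkQ, if_neg (fun hc => hkQ (him1.mp hc))]
      by_cases hkS : k ∈ S''
      · rw [if_pos hkS, if_pos (him2.mpr hkS)]
      · rw [if_neg hkS, if_neg (fun hc => hkS (him2.mp hc)), he.extend_apply]
  · rw [Function.extend_apply' _ _ _ hj]
    have hQ' : j ∉ Q.image (oeC ({i} : Finset (Fin n))) := by
      intro hc
      obtain ⟨a, _, hae⟩ := Finset.mem_image.mp hc
      exact hj ⟨a, hae⟩
    have hS' : j ∉ S''.image (oeC ({i} : Finset (Fin n))) := by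
      intro hc
      obtain ⟨a, _, hae⟩ := Finset.mem_image.mp hc
      exact hj ⟨a, hae⟩
    rw [if_neg hQ', if_neg hS', Function.extend_apply' _ _ _ hj]

end Chunk8b

-- ===== chunk 9: main induction =====
section Chunk9

lemma mrg_zero (κ : ConcordanceMeasure) {n : ℕ} (C : (Fin n → ℝ) → ℝ) (P : Finset (Fin n))
    (h : n ≤ P.card + 1) : mrg κ C P = 0 :=
  kappa_le_one κ (by rw [Finset.card_compl, Fintype.card_fin]; omega) _

theorem main_formula (κ : ConcordanceMeasure) :
    ∀ s n : ℕ, 2 ≤ n → ∀ C : (Fin n → ℝ) → ℝ, IsCopula C → ∀ S : Finset (Fin n), S.card = s →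
    κ.r n * κ.κ n (reflTrans S C) =
      ∑ j ∈ Finset.Icc (n - S.card) n, (-1 : ℝ) ^ (n - S.card + j) *
        (∏ k ∈ Finset.Icc j n, κ.r k) *
        ∑ P ∈ S.powersetCard (n - j), mrg κ C P := by
  intro s
  induction s with
  | zero =>
    intro n hn C hC S hS
    have hSe : S = ∅ := Finset.card_eq_zero.mp hS
    subst hSe
    rw [reflTrans_empty, Finset.card_empty, Nat.sub_zero, Finset.Icc_self,
      Finset.sum_singleton, Finset.Icc_self, Finset.prod_singleton, Nat.sub_self,
      Finset.powersetCard_zero, Finset.sum_singleton, mrg_empty κ hC]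
    rw [(Even.add_self n).neg_one_pow]
    ring
  | succ s ih =>
    intro n hn C hC S hS
    have hSne : S.Nonempty := Finset.card_pos.mp (by omega)
    obtain ⟨i, hiS⟩ := hSne
    set S' := S.erase i with hS'def
    have hiS' : i ∉ S' := Finset.notMem_erase i S
    have hS'card : S'.card = s := by
      rw [hS'def, Finset.card_erase_of_mem hiS, hS]
      omega
    have hins : insert i S' = S := Finset.insert_erase hiS
    have hsn : s + 1 ≤ n := by
      have := Finset.card_le_univ S
      rw [hS] at this
      simpa using this
    by_cases hn2 : n = 2
    · -- dimension 2 base case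
      subst hn2
      have hs1 : s ≤ 1 := by omega
      interval_cases s
      · -- S = {i}
        have hS'e : S' = ∅ := Finset.card_eq_zero.mp hS'card
        have hSi : S = {i} := by rw [← hins, hS'e]; rfl
        rw [hSi, Finset.card_singleton]
        rw [kappa_refl_single_two κ hC i]
        have hicc : Finset.Icc (2 - 1) 2 = {1, 2} := by decide
        rw [hicc, Finset.sum_insert (by decide), Finset.sum_singleton]
        have h1 : ({i} : Finset (Fin 2)).powersetCard (2 - 1) = {{i}} := by
          have := Finset.powersetCard_self ({i} : Finset (Fin 2))
          rwa [Finset.card_singleton] at this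
        rw [h1, Finset.sum_singleton]
        rw [mrg_zero κ C {i} (by rw [Finset.card_singleton])]
        rw [show (2:ℕ) - 2 = 0 from rfl, Finset.powersetCard_zero, Finset.sum_singleton,
          mrg_empty κ hC, Finset.Icc_self, Finset.prod_singleton]
        norm_num
      · -- S = univ
        have hSu : S = Finset.univ := Finset.eq_univ_of_card S (by rw [hS]; rfl)
        rw [hSu, Finset.card_univ, Fintype.card_fin]
        rw [κ.duality 2 (by omega) C hC]
        have hicc : Finset.Icc (2 - 2) 2 = {0, 1, 2} := by decide
        rw [hicc, Finset.sum_insert (by decide), Finset.sum_insert (by decide),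
          Finset.sum_singleton]
        have hz0 : ∑ P ∈ (Finset.univ : Finset (Fin 2)).powersetCard (2 - 0), mrg κ C P = 0 := by
          refine Finset.sum_eq_zero fun P hP => ?_
          have := (Finset.mem_powersetCard.mp hP).2
          exact mrg_zero κ C P (by omega)
        have hz1 : ∑ P ∈ (Finset.univ : Finset (Fin 2)).powersetCard (2 - 1), mrg κ C P = 0 := by
          refine Finset.sum_eq_zero fun P hP => ?_
          have := (Finset.mem_powersetCard.mp hP).2
          exact mrg_zero κ C P (by omega)
        rw [hz0, hz1]
        rw [show (2:ℕ) - 2 = 0 from rfl, Finset.powersetCard_zero, Finset.sum_singleton,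
          mrg_empty κ hC, Finset.Icc_self, Finset.prod_singleton]
        norm_num
    · -- dimension ≥ 3 : induction step via the transition property
      have hn3 : 3 ≤ n := by omega
      obtain ⟨m, rfl⟩ : ∃ m, n = m + 1 := ⟨n - 1, by omega⟩
      have hm2 : 2 ≤ m := by omega
      have hsm : s ≤ m := by omega
      have hcc : (({i} : Finset (Fin (m+1)))ᶜ).card = m := by
        rw [Finset.card_compl, Finset.card_singleton, Fintype.card_fin]
        omega
      have hei := oeC_inj ({i} : Finset (Fin (m+1)))
      have hrange : ∀ j, (∃ k, oeC ({i} : Finset (Fin (m+1))) k = j) ↔ j ≠ i := by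
        intro j
        rw [oeC_range]
        simp [Finset.mem_compl]
      set S'' : Finset (Fin ((({i} : Finset (Fin (m+1)))ᶜ).card)) :=
        Finset.univ.filter (fun k => oeC ({i} : Finset (Fin (m+1))) k ∈ S') with hS''def
      have hS''img : S''.image (oeC ({i} : Finset (Fin (m+1)))) = S' := by
        rw [hS''def]
        have hsub : S' ⊆ Finset.univ.image (oeC ({i} : Finset (Fin (m+1)))) := by
          intro j hj
          have hji : j ≠ i := fun h => hiS' (h ▸ hj)
          obtain ⟨k, hk⟩ := (hrange j).mpr hji
          exact Finset.mem_image.mpr ⟨k, Finset.mem_univ k, hk⟩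
        exact image_filter_mem Finset.univ hsub
      have hS''card : S''.card = s := by
        rw [← hS'card, ← hS''img, Finset.card_image_of_injective _ hei]
      set D := properMarg C ({i} : Finset (Fin (m+1))) with hDdef
      have hD : IsCopula D := isCopula_properMarg hC _
      have hT := trans_at κ (by rw [hcc]; exact hm2) (by rw [hcc])
        (isCopula_reflTrans hC S') i hei hrange (isCopula_reflTrans hD S'')
        (fun x _ => refl_marg_id C i S' S'' hS''img x)
      rw [← reflTrans_insert_eq hiS', hins] at hT
      have hIH1 := ih ((({i} : Finset (Fin (m+1)))ᶜ).card) (by rw [hcc]; exact hm2) D hD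
        S'' hS''card
      set X := κ.r ((({i} : Finset (Fin (m+1)))ᶜ).card)
        * κ.κ ((({i} : Finset (Fin (m+1)))ᶜ).card) (reflTrans S'' D) with hXdef
      -- replace the marginal sums in hIH1
      have hQsum : ∀ j : ℕ,
          ∑ Q ∈ S''.powersetCard ((({i} : Finset (Fin (m+1)))ᶜ).card - j), mrg κ D Q
          = ∑ P' ∈ S'.powersetCard ((({i} : Finset (Fin (m+1)))ᶜ).card - j),
              mrg κ C (insert i P') := by
        intro j
        calc ∑ Q ∈ S''.powersetCard ((({i} : Finset (Fin (m+1)))ᶜ).card - j), mrg κ D Q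
            = ∑ Q ∈ S''.powersetCard ((({i} : Finset (Fin (m+1)))ᶜ).card - j),
                 mrg κ C (insert i (Q.image (oeC ({i} : Finset (Fin (m+1)))))) :=
              Finset.sum_congr rfl (fun Q _ => mrg_marg κ hC i Q)
        _ = ∑ P' ∈ (S''.image (oeC ({i} : Finset (Fin (m+1))))).powersetCard
                ((({i} : Finset (Fin (m+1)))ᶜ).card - j), mrg κ C (insert i P') :=
              sum_powersetCard_image hei S'' _ (fun P' => mrg κ C (insert i P'))
        _ = _ := by rw [hS''img]
      rw [hS''card] at hIH1
      rw [Finset.sum_congr rfl (fun j _ => by rw [hQsum j])] at hIH1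
      rw [hcc] at hIH1
      -- hIH1 : X = ∑ j in Icc (m-s) m, ... (insert i P') sums
      have hIH2 := ih (m+1) hn C hC S' hS'card
      rw [hS'card] at hIH2
      -- now the goal
      rw [hS]
      rw [show m + 1 - (s + 1) = m - s from by omega]
      have hkey : ∑ j ∈ Finset.Icc (m - s) (m+1), (-1 : ℝ) ^ (m - s + j) *
            (∏ k ∈ Finset.Icc j (m+1), κ.r k) * ∑ P ∈ S.powersetCard (m + 1 - j), mrg κ C P
          = κ.r (m+1) * (∑ j ∈ Finset.Icc (m - s) m, (-1 : ℝ) ^ (m - s + j) *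
              (∏ k ∈ Finset.Icc j m, κ.r k) *
              ∑ P' ∈ S'.powersetCard (m - j), mrg κ C (insert i P'))
            - ∑ j ∈ Finset.Icc (m + 1 - s) (m+1), (-1 : ℝ) ^ (m + 1 - s + j) *
              (∏ k ∈ Finset.Icc j (m+1), κ.r k) *
              ∑ P ∈ S'.powersetCard (m + 1 - j), mrg κ C P := by
        rw [Finset.sum_Icc_succ_top (show m - s ≤ m + 1 by omega)]
        have hsplitAS : ∀ j ∈ Finset.Icc (m - s) m,
            (-1 : ℝ) ^ (m - s + j) * (∏ k ∈ Finset.Icc j (m+1), κ.r k) *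
              ∑ P ∈ S.powersetCard (m + 1 - j), mrg κ C P
            = κ.r (m+1) * ((-1 : ℝ) ^ (m - s + j) * (∏ k ∈ Finset.Icc j m, κ.r k) *
                ∑ P' ∈ S'.powersetCard (m - j), mrg κ C (insert i P'))
              + (-1 : ℝ) ^ (m - s + j) * (∏ k ∈ Finset.Icc j (m+1), κ.r k) *
                ∑ P ∈ S'.powersetCard (m + 1 - j), mrg κ C P := by
          intro j hj
          obtain ⟨hj1, hj2⟩ := Finset.mem_Icc.mp hj
          have hsucc : m + 1 - j = (m - j) + 1 := by omega
          have hdisj : Disjoint (S'.powersetCard ((m - j) + 1))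
              ((S'.powersetCard (m - j)).image (insert i)) := by
            rw [Finset.disjoint_left]
            intro a ha hb
            have ha' := (Finset.mem_powersetCard.mp ha).1
            obtain ⟨P', hP', rfl⟩ := Finset.mem_image.mp hb
            exact hiS' (ha' (Finset.mem_insert_self i P'))
          have hASsplit : (∑ P ∈ S.powersetCard (m + 1 - j), mrg κ C P)
              = (∑ P ∈ S'.powersetCard (m + 1 - j), mrg κ C P)
                + ∑ P' ∈ S'.powersetCard (m - j), mrg κ C (insert i P') := by
            rw [← hins, hsucc, Finset.powersetCard_succ_insert hiS',
              Finset.sum_union hdisj]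
            congr 1
            refine Finset.sum_image ?_
            intro x hx y hy hxy
            have hxi : i ∉ x := fun h => hiS' ((Finset.mem_powersetCard.mp hx).1 h)
            have hyi : i ∉ y := fun h => hiS' ((Finset.mem_powersetCard.mp hy).1 h)
            have h5 := congrArg (fun t => Finset.erase t i) hxy
            simpa [Finset.erase_insert hxi, Finset.erase_insert hyi] using h5
          have hprod : (∏ k ∈ Finset.Icc j (m+1), κ.r k)
              = (∏ k ∈ Finset.Icc j m, κ.r k) * κ.r (m+1) :=
            Finset.prod_Icc_succ_top (by omega) κ.r
          rw [hASsplit, hprod]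
          ring
        rw [Finset.sum_congr rfl hsplitAS, Finset.sum_add_distrib, ← Finset.mul_sum]
        have hAStop : (∑ P ∈ S.powersetCard (m + 1 - (m+1)), mrg κ C P)
            = ∑ P ∈ S'.powersetCard (m + 1 - (m+1)), mrg κ C P := by
          rw [Nat.sub_self, Finset.powersetCard_zero, Finset.powersetCard_zero]
        rw [hAStop]
        rw [add_assoc, ← Finset.sum_Icc_succ_top (show m - s ≤ m + 1 by omega)
          (f := fun j => (-1 : ℝ) ^ (m - s + j) * (∏ k ∈ Finset.Icc j (m+1), κ.r k) *
            ∑ P ∈ S'.powersetCard (m + 1 - j), mrg κ C P)]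
        have hfinal : ∑ j ∈ Finset.Icc (m - s) (m+1), (-1 : ℝ) ^ (m - s + j) *
              (∏ k ∈ Finset.Icc j (m+1), κ.r k) *
              ∑ P ∈ S'.powersetCard (m + 1 - j), mrg κ C P
            = - ∑ j ∈ Finset.Icc (m + 1 - s) (m+1), (-1 : ℝ) ^ (m + 1 - s + j) *
              (∏ k ∈ Finset.Icc j (m+1), κ.r k) *
              ∑ P ∈ S'.powersetCard (m + 1 - j), mrg κ C P := by
          have hins2 : Finset.Icc (m - s) (m+1) = insert (m - s) (Finset.Icc (m + 1 - s) (m+1)) := by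
            ext a
            simp only [Finset.mem_Icc, Finset.mem_insert]
            omega
          rw [hins2, Finset.sum_insert (by simp only [Finset.mem_Icc]; omega)]
          have hz : S'.powersetCard (m + 1 - (m - s)) = ∅ :=
            Finset.powersetCard_eq_empty.mpr (by rw [hS'card]; omega)
          rw [hz, Finset.sum_empty, mul_zero, zero_add, ← Finset.sum_neg_distrib]
          refine Finset.sum_congr rfl fun j hj => ?_
          have hsign : (-1 : ℝ) ^ (m + 1 - s + j) = -(-1 : ℝ) ^ (m - s + j) := by
            rw [show m + 1 - s + j = (m - s + j) + 1 from by omega, pow_succ]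
            ring
          rw [hsign]
          ring
        rw [hfinal]
        ring
      rw [hkey, ← hIH1, ← hIH2]
      have hlin : κ.κ (m+1) (reflTrans S C) = X - κ.κ (m+1) (reflTrans S' C) := by
        linarith [hT]
      rw [hlin]
      ring
  
end Chunk9

/-- Reflection-reduction formula (case `T = ∅` of Theorem 4.4 of Taylor): the measure of
concordance of `σ_S*(C)` in terms of the measures of concordance of the marginals of `C`.
Here `κ_j(C_P)` is `κ_j` of the proper `j`-copula of `C_P` (note `card Pᶜ = j`). -/
theorem stmt14 (κ : ConcordanceMeasure) {n : ℕ} (hn : 2 ≤ n)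
    (C : (Fin n → ℝ) → ℝ) (hC : IsCopula C) (S : Finset (Fin n)) :
    κ.r n * κ.κ n (reflTrans S C) =
      ∑ j ∈ Finset.Icc (n - S.card) n, (-1 : ℝ) ^ (n - S.card + j) *
        (∏ k ∈ Finset.Icc j n, κ.r k) *
        ∑ P ∈ S.powersetCard (n - j), κ.κ (Pᶜ.card) (properMarg C P) := by
  have h := main_formula κ S.card n hn C hC S rfl
  unfold mrg at h
  exact h

end
end

section
/- Let κ be a multivariate measure of concordance with r_2 = 2/3, and suppose r_3, r_4 ≠ 0. Then for every 4-copula C: κ_3(C_1) + κ_3(C_2) − (2/3)κ_2(C_{12}) = κ_3(C_3) + κ_3(C_4) − (2/3)κ_2(C_{34}), where C_i and C_{ij} denote extended marginals (coordinates set to 1) evaluated via their proper copulas. -/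
open MeasureTheory Filter

noncomputable section

namespace Stmt16

def Wit {n : ℕ} (C : (Fin n → ℝ) → ℝ) (μ : Measure (Fin n → ℝ)) : Prop :=
  IsProbabilityMeasure μ ∧
    (∀ x ∈ cube n, C x = (μ (box x)).toReal) ∧
    (∀ i : Fin n, μ.map (fun y => y i) = volume.restrict (Set.Icc (0:ℝ) 1))

lemma mem_cube {n : ℕ} {x : Fin n → ℝ} : x ∈ cube n ↔ ∀ i, 0 ≤ x i ∧ x i ≤ 1 := by
  constructor
  · intro h i; exact h i (Set.mem_univ i)
  · intro h i _; exact ⟨(h i).1, (h i).2⟩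

lemma mem_box {n : ℕ} {x z : Fin n → ℝ} : z ∈ box x ↔ ∀ i, 0 ≤ z i ∧ z i ≤ x i := by
  constructor
  · intro h i; exact h i (Set.mem_univ i)
  · intro h i _; exact ⟨(h i).1, (h i).2⟩

lemma measurableSet_box {n : ℕ} (x : Fin n → ℝ) : MeasurableSet (box x) :=
  MeasurableSet.univ_pi fun _ => measurableSet_Icc

lemma point_null {n : ℕ} {C : (Fin n → ℝ) → ℝ} {μ : Measure (Fin n → ℝ)}
    (w : Wit C μ) (i : Fin n) (c : ℝ) : μ {z | z i = c} = 0 := by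
  have h1 : {z : Fin n → ℝ | z i = c} = (fun z : Fin n → ℝ => z i) ⁻¹' {c} := rfl
  rw [h1, ← Measure.map_apply (measurable_pi_apply i) (measurableSet_singleton c),
    w.2.2 i, Measure.restrict_apply (measurableSet_singleton c)]
  exact measure_mono_null Set.inter_subset_left Real.volume_singleton

lemma slice_conull {n : ℕ} {C : (Fin n → ℝ) → ℝ} {μ : Measure (Fin n → ℝ)}
    (w : Wit C μ) (i : Fin n) : μ ({z | 0 ≤ z i ∧ z i ≤ 1}ᶜ) = 0 := by
  have h1 : ({z : Fin n → ℝ | 0 ≤ z i ∧ z i ≤ 1}ᶜ : Set (Fin n → ℝ))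
      = (fun z : Fin n → ℝ => z i) ⁻¹' (Set.Icc (0:ℝ) 1)ᶜ := by
    ext z; simp [Set.mem_Icc]
  rw [h1, ← Measure.map_apply (measurable_pi_apply i) measurableSet_Icc.compl,
    w.2.2 i, Measure.restrict_apply measurableSet_Icc.compl]
  simp

-- ===== permutation =====

lemma wit_perm {n : ℕ} {C : (Fin n → ℝ) → ℝ} {μ : Measure (Fin n → ℝ)}
    (w : Wit C μ) (τ : Equiv.Perm (Fin n)) :
    Wit (permTrans τ C) (μ.map (fun z => fun i => z (τ.symm i))) := by
  obtain ⟨hp, hbox, hmarg⟩ := w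
  have hg : Measurable (fun z : Fin n → ℝ => fun i => z (τ.symm i)) :=
    measurable_pi_lambda _ fun i => measurable_pi_apply _
  refine ⟨Measure.isProbabilityMeasure_map hg.aemeasurable, ?_, ?_⟩
  · intro x hx
    have hx' : (fun i => x (τ i)) ∈ cube n := by
      rw [mem_cube] at hx ⊢; exact fun i => hx (τ i)
    rw [Measure.map_apply hg (measurableSet_box x)]
    have hpre : (fun z : Fin n → ℝ => fun i => z (τ.symm i)) ⁻¹' box x
        = box (fun i => x (τ i)) := by
      ext z
      simp only [Set.mem_preimage, mem_box]
      constructor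
      · intro h j
        have := h (τ j); simpa using this
      · intro h i
        have := h (τ.symm i); simpa using this
    rw [hpre]
    exact hbox _ hx'
  · intro i
    rw [Measure.map_map (measurable_pi_apply i) hg]
    exact hmarg (τ.symm i)

lemma isCopula_perm {n : ℕ} {C : (Fin n → ℝ) → ℝ} (hC : IsCopula C) (τ : Equiv.Perm (Fin n)) :
    IsCopula (permTrans τ C) := by
  obtain ⟨μ, w⟩ := hC
  exact ⟨_, wit_perm w τ⟩

-- ===== marginal =====

def margAt {n : ℕ} (C : (Fin (n+1) → ℝ) → ℝ) (a : Fin (n+1)) : (Fin n → ℝ) → ℝ :=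
  fun y => C (a.insertNth 1 y)

lemma insertNth_mem_cube {n : ℕ} {y : Fin n → ℝ} (a : Fin (n+1)) (hy : y ∈ cube n) :
    a.insertNth 1 y ∈ cube (n+1) := by
  rw [mem_cube] at hy ⊢
  intro j
  rcases eq_or_ne j a with rfl | hja
  · rw [Fin.insertNth_apply_same]; norm_num
  · obtain ⟨k, rfl⟩ := Fin.exists_succAbove_eq hja
    rw [Fin.insertNth_apply_succAbove]; exact hy k

lemma wit_marg {n : ℕ} {C : (Fin (n+1) → ℝ) → ℝ} {μ : Measure (Fin (n+1) → ℝ)}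
    (w : Wit C μ) (a : Fin (n+1)) :
    Wit (margAt C a) (μ.map (fun z => fun k : Fin n => z (a.succAbove k))) := by
  obtain ⟨hp, hbox, hmarg⟩ := w
  have hg : Measurable (fun z : Fin (n+1) → ℝ => fun k : Fin n => z (a.succAbove k)) :=
    measurable_pi_lambda _ fun k => measurable_pi_apply _
  refine ⟨Measure.isProbabilityMeasure_map hg.aemeasurable, ?_, ?_⟩
  · intro y hy
    rw [Measure.map_apply hg (measurableSet_box y)]
    have key : box (a.insertNth 1 y)
        = ((fun z : Fin (n+1) → ℝ => fun k : Fin n => z (a.succAbove k)) ⁻¹' box y)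
          ∩ {z | 0 ≤ z a ∧ z a ≤ 1} := by
      ext z
      simp only [Set.mem_inter_iff, Set.mem_preimage, mem_box, Set.mem_setOf_eq]
      constructor
      · intro h
        refine ⟨fun k => ?_, ?_⟩
        · have := h (a.succAbove k); rwa [Fin.insertNth_apply_succAbove] at this
        · have := h a; rwa [Fin.insertNth_apply_same] at this
      · rintro ⟨h1, h2⟩ j
        rcases eq_or_ne j a with rfl | hja
        · rwa [Fin.insertNth_apply_same]
        · obtain ⟨k, rfl⟩ := Fin.exists_succAbove_eq hja
          rw [Fin.insertNth_apply_succAbove]; exact h1 k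
    have hnull : μ ({z : Fin (n+1) → ℝ | 0 ≤ z a ∧ z a ≤ 1}ᶜ) = 0 :=
      slice_conull ⟨hp, hbox, hmarg⟩ a
    calc (margAt C a) y = (μ (box (a.insertNth 1 y))).toReal :=
          hbox _ (insertNth_mem_cube a hy)
      _ = (μ ((fun z : Fin (n+1) → ℝ => fun k : Fin n => z (a.succAbove k)) ⁻¹' box y)).toReal := by
          rw [key, measure_inter_conull hnull]
  · intro k
    rw [Measure.map_map (measurable_pi_apply k) hg]
    exact hmarg (a.succAbove k)

lemma isCopula_marg {n : ℕ} {C : (Fin (n+1) → ℝ) → ℝ} (hC : IsCopula C) (a : Fin (n+1)) :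
    IsCopula (margAt C a) := by
  obtain ⟨μ, w⟩ := hC
  exact ⟨_, wit_marg w a⟩



def reflMap {n : ℕ} (S : Finset (Fin n)) : (Fin n → ℝ) → (Fin n → ℝ) :=
  fun z => fun i => if i ∈ S then 1 - z i else z i

lemma measurable_reflMap {n : ℕ} (S : Finset (Fin n)) : Measurable (reflMap S) := by
  apply measurable_pi_lambda
  intro i
  by_cases hi : i ∈ S
  · simpa [reflMap, hi] using (by fun_prop : Measurable fun z : Fin n → ℝ => 1 - z i)
  · simpa [reflMap, hi] using measurable_pi_apply i

def refp {n : ℕ} (S T : Finset (Fin n)) (x : Fin n → ℝ) : Fin n → ℝ :=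
  fun i => if i ∈ T then 1 - x i else if i ∈ S then 1 else x i

lemma reflTrans_eq {n : ℕ} (S : Finset (Fin n)) (C : (Fin n → ℝ) → ℝ) (x : Fin n → ℝ) :
    reflTrans S C x = ∑ T ∈ S.powerset, (-1 : ℝ) ^ T.card * C (refp S T x) := rfl

lemma refp_mem_cube {n : ℕ} {S T : Finset (Fin n)} {x : Fin n → ℝ} (hx : x ∈ cube n) :
    refp S T x ∈ cube n := by
  rw [mem_cube] at hx ⊢
  intro i
  unfold refp
  split_ifs <;> constructor <;> linarith [(hx i).1, (hx i).2]

def Aset {n : ℕ} (S : Finset (Fin n)) (x : Fin n → ℝ) : Set (Fin n → ℝ) :=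
  Set.univ.pi fun i => Set.Icc (if i ∈ S then 1 - x i else 0) (if i ∈ S then 1 else x i)

lemma mem_Aset {n : ℕ} {S : Finset (Fin n)} {x z : Fin n → ℝ} :
    z ∈ Aset S x ↔ ∀ i, (if i ∈ S then 1 - x i else 0) ≤ z i ∧
      z i ≤ (if i ∈ S then 1 else x i) := by
  unfold Aset
  constructor
  · intro h i; exact h i (Set.mem_univ i)
  · intro h i _; exact ⟨(h i).1, (h i).2⟩

lemma measurableSet_Aset {n : ℕ} (S : Finset (Fin n)) (x : Fin n → ℝ) :
    MeasurableSet (Aset S x) :=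
  MeasurableSet.univ_pi fun _ => measurableSet_Icc

lemma IE {n : ℕ} {C : (Fin n → ℝ) → ℝ} {μ : Measure (Fin n → ℝ)} (w : Wit C μ)
    (S : Finset (Fin n)) : ∀ x ∈ cube n,
    (μ (Aset S x)).toReal = ∑ T ∈ S.powerset, (-1 : ℝ) ^ T.card * C (refp S T x) := by
  haveI : IsProbabilityMeasure μ := w.1
  induction S using Finset.induction_on with
  | empty =>
    intro x hx
    have h1 : Aset ∅ x = box x := by
      ext z; rw [mem_Aset, mem_box]; simp
    have h2 : refp ∅ ∅ x = x := by
      funext i; simp [refp]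
    rw [h1, Finset.powerset_empty, Finset.sum_singleton, h2]
    simp [← w.2.1 x hx]
  | @insert a S ha IH =>
    intro x hx
    rw [mem_cube] at hx
    have hx1 : Function.update x a 1 ∈ cube n := by
      rw [mem_cube]; intro i
      by_cases h : i = a
      · rw [h, Function.update_self]; norm_num
      · rw [Function.update_of_ne h]; exact hx i
    have hx2 : Function.update x a (1 - x a) ∈ cube n := by
      rw [mem_cube]; intro i
      by_cases h : i = a
      · rw [h, Function.update_self]; constructor <;> linarith [(hx a).1, (hx a).2]
      · rw [Function.update_of_ne h]; exact hx i
    -- membership characterizations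
    have hAx1 : ∀ z : Fin n → ℝ, z ∈ Aset S (Function.update x a 1) ↔
        ((∀ i, i ≠ a → ((if i ∈ S then 1 - x i else 0) ≤ z i ∧
          z i ≤ (if i ∈ S then 1 else x i))) ∧ (0 ≤ z a ∧ z a ≤ 1)) := by
      intro z; rw [mem_Aset]
      constructor
      · intro h
        refine ⟨fun i hia => ?_, ?_⟩
        · have := h i; rwa [Function.update_of_ne hia] at this
        · have := h a; rwa [if_neg ha, if_neg ha, Function.update_self] at this
      · rintro ⟨h1, h2⟩ i
        by_cases hia : i = a
        · rw [hia, if_neg ha, if_neg ha, Function.update_self]; exact h2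
        · rw [Function.update_of_ne hia]; exact h1 i hia
    have hAx2 : ∀ z : Fin n → ℝ, z ∈ Aset S (Function.update x a (1 - x a)) ↔
        ((∀ i, i ≠ a → ((if i ∈ S then 1 - x i else 0) ≤ z i ∧
          z i ≤ (if i ∈ S then 1 else x i))) ∧ (0 ≤ z a ∧ z a ≤ 1 - x a)) := by
      intro z; rw [mem_Aset]
      constructor
      · intro h
        refine ⟨fun i hia => ?_, ?_⟩
        · have := h i; rwa [Function.update_of_ne hia] at this
        · have := h a; rwa [if_neg ha, if_neg ha, Function.update_self] at this
      · rintro ⟨h1, h2⟩ i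
        by_cases hia : i = a
        · rw [hia, if_neg ha, if_neg ha, Function.update_self]; exact h2
        · rw [Function.update_of_ne hia]; exact h1 i hia
    have hAins : ∀ z : Fin n → ℝ, z ∈ Aset (insert a S) x ↔
        ((∀ i, i ≠ a → ((if i ∈ S then 1 - x i else 0) ≤ z i ∧
          z i ≤ (if i ∈ S then 1 else x i))) ∧ (1 - x a ≤ z a ∧ z a ≤ 1)) := by
      intro z; rw [mem_Aset]
      constructor
      · intro h
        refine ⟨fun i hia => ?_, ?_⟩
        · have := h i
          simp only [Finset.mem_insert, hia, false_or] at this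
          exact this
        · have := h a
          simp only [Finset.mem_insert, true_or, if_true] at this
          exact this
      · rintro ⟨h1, h2⟩ i
        by_cases hia : i = a
        · simp only [hia, Finset.mem_insert, true_or, if_true]; exact h2
        · simp only [Finset.mem_insert, hia, false_or]; exact h1 i hia
    have hU : Aset S (Function.update x a 1)
        = Aset S (Function.update x a (1 - x a)) ∪ Aset (insert a S) x := by
      ext z
      rw [Set.mem_union, hAx1 z, hAx2 z, hAins z]
      constructor
      · rintro ⟨h1, h2a, h2b⟩
        by_cases hz : z a ≤ 1 - x a
        · exact Or.inl ⟨h1, h2a, hz⟩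
        · exact Or.inr ⟨h1, by linarith, h2b⟩
      · rintro (⟨h1, h2a, h2b⟩ | ⟨h1, h2a, h2b⟩)
        · exact ⟨h1, h2a, by linarith [(hx a).1]⟩
        · exact ⟨h1, by linarith [(hx a).2], h2b⟩
    have hI : μ (Aset S (Function.update x a (1 - x a)) ∩ Aset (insert a S) x) = 0 := by
      refine measure_mono_null ?_ (point_null w a (1 - x a))
      rintro z ⟨h1, h2⟩
      rw [hAx2 z] at h1
      rw [hAins z] at h2
      exact le_antisymm h1.2.2 h2.2.1
    have hsum : μ (Aset S (Function.update x a 1))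
        = μ (Aset S (Function.update x a (1 - x a))) + μ (Aset (insert a S) x) := by
      have h := measure_union_add_inter (μ := μ)
        (Aset S (Function.update x a (1 - x a))) (measurableSet_Aset (insert a S) x)
      rw [hI, add_zero] at h
      rw [hU, h]
    have htr : (μ (Aset (insert a S) x)).toReal
        = (μ (Aset S (Function.update x a 1))).toReal
          - (μ (Aset S (Function.update x a (1 - x a)))).toReal := by
      rw [hsum, ENNReal.toReal_add (measure_ne_top μ _) (measure_ne_top μ _)]
      ring
    rw [htr, IH (Function.update x a 1) hx1, IH (Function.update x a (1 - x a)) hx2,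
      Finset.sum_powerset_insert ha]
    have hs1 : ∑ T ∈ S.powerset, (-1 : ℝ) ^ T.card * C (refp S T (Function.update x a 1))
        = ∑ T ∈ S.powerset, (-1 : ℝ) ^ T.card * C (refp (insert a S) T x) := by
      refine Finset.sum_congr rfl fun T hT => ?_
      rw [Finset.mem_powerset] at hT
      have haT : a ∉ T := fun h => ha (hT h)
      congr 2
      funext i
      unfold refp
      by_cases hia : i = a
      · rw [hia]
        simp [haT, ha]
      · rw [Function.update_of_ne hia]
        simp only [Finset.mem_insert, hia, false_or]
    have hs2 : ∑ T ∈ S.powerset, (-1 : ℝ) ^ T.card * C (refp S T (Function.update x a (1 - x a)))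
        = -∑ T ∈ S.powerset,
            (-1 : ℝ) ^ (insert a T).card * C (refp (insert a S) (insert a T) x) := by
      rw [← Finset.sum_neg_distrib]
      refine Finset.sum_congr rfl fun T hT => ?_
      rw [Finset.mem_powerset] at hT
      have haT : a ∉ T := fun h => ha (hT h)
      rw [Finset.card_insert_of_notMem haT, pow_succ]
      have harg : refp (insert a S) (insert a T) x = refp S T (Function.update x a (1 - x a)) := by
        funext i
        unfold refp
        by_cases hia : i = a
        · rw [hia]
          rw [if_pos (Finset.mem_insert_self a T), if_neg haT, if_neg ha, Function.update_self]
        · rw [Function.update_of_ne hia]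
          simp only [Finset.mem_insert, hia, false_or]
      rw [harg]
      ring
    rw [hs1, hs2]
    ring

lemma wit_refl {n : ℕ} {C : (Fin n → ℝ) → ℝ} {μ : Measure (Fin n → ℝ)}
    (w : Wit C μ) (S : Finset (Fin n)) :
    Wit (reflTrans S C) (μ.map (reflMap S)) := by
  haveI : IsProbabilityMeasure μ := w.1
  refine ⟨Measure.isProbabilityMeasure_map (measurable_reflMap S).aemeasurable, ?_, ?_⟩
  · intro x hx
    rw [Measure.map_apply (measurable_reflMap S) (measurableSet_box x)]
    have hpre : reflMap S ⁻¹' box x = Aset S x := by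
      ext z
      simp only [Set.mem_preimage, mem_box, mem_Aset, reflMap]
      constructor
      · intro h i
        have := h i
        by_cases hi : i ∈ S
        · simp only [hi, if_true] at this ⊢
          constructor <;> linarith [this.1, this.2]
        · simp only [hi, if_false] at this ⊢
          exact this
      · intro h i
        have := h i
        by_cases hi : i ∈ S
        · simp only [hi, if_true] at this ⊢
          constructor <;> linarith [this.1, this.2]
        · simp only [hi, if_false] at this ⊢
          exact this
    rw [hpre, reflTrans_eq]
    exact (IE w S x hx).symm
  · intro i
    rw [Measure.map_map (measurable_pi_apply i) (measurable_reflMap S)]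
    by_cases hi : i ∈ S
    · have hcomp : ((fun y : Fin n → ℝ => y i) ∘ reflMap S)
          = (fun t : ℝ => 1 - t) ∘ (fun y : Fin n → ℝ => y i) := by
        funext z; simp [reflMap, hi]
      have mf : Measurable (fun t : ℝ => 1 - t) := measurable_const.sub measurable_id
      rw [hcomp, ← Measure.map_map mf (measurable_pi_apply i), w.2.2 i]
      have mp : MeasurePreserving (fun t : ℝ => 1 - t) volume volume :=
        Measure.measurePreserving_sub_left volume 1
      have hpre2 : (fun t : ℝ => 1 - t) ⁻¹' Set.Icc (0:ℝ) 1 = Set.Icc (0:ℝ) 1 := by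
        ext t
        simp only [Set.mem_preimage, Set.mem_Icc]
        constructor <;> intro h <;> constructor <;> linarith [h.1, h.2]
      conv_rhs => rw [← mp.map_eq]
      rw [Measure.restrict_map mf measurableSet_Icc, hpre2]
    · have hcomp : ((fun y : Fin n → ℝ => y i) ∘ reflMap S)
          = (fun y : Fin n → ℝ => y i) := by
        funext z; simp [reflMap, hi]
      rw [hcomp]
      exact w.2.2 i

lemma isCopula_refl {n : ℕ} {C : (Fin n → ℝ) → ℝ} (hC : IsCopula C) (S : Finset (Fin n)) :
    IsCopula (reflTrans S C) := by
  obtain ⟨μ, w⟩ := hC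
  exact ⟨_, wit_refl w S⟩

lemma reflMap_comp {n : ℕ} (S T : Finset (Fin n)) :
    reflMap T ∘ reflMap S = reflMap (symmDiff S T) := by
  funext z
  funext i
  simp only [Function.comp_apply, reflMap, Finset.mem_symmDiff]
  by_cases h1 : i ∈ S <;> by_cases h2 : i ∈ T <;> simp [h1, h2] <;> ring

lemma refl_refl_cube {n : ℕ} {C : (Fin n → ℝ) → ℝ} (hC : IsCopula C) (S T : Finset (Fin n)) :
    ∀ x ∈ cube n, reflTrans T (reflTrans S C) x = reflTrans (symmDiff S T) C x := by
  obtain ⟨μ, w⟩ := hC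
  intro x hx
  have w1 := wit_refl w S
  have w2 := wit_refl w1 T
  have w3 := wit_refl w (symmDiff S T)
  rw [w2.2.1 x hx, w3.2.1 x hx]
  rw [Measure.map_map (measurable_reflMap T) (measurable_reflMap S), reflMap_comp]



lemma kappa_congr (κ : ConcordanceMeasure) {n : ℕ} (hn : 2 ≤ n) {A B : (Fin n → ℝ) → ℝ}
    (hA : IsCopula A) (hB : IsCopula B) (h : ∀ x ∈ cube n, A x = B x) :
    κ.κ n A = κ.κ n B := by
  have key : ∀ x ∈ cube n, reflTrans Finset.univ A x = reflTrans Finset.univ B x := by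
    intro x hx
    rw [reflTrans_eq, reflTrans_eq]
    exact Finset.sum_congr rfl fun T _ => by rw [h _ (refp_mem_cube hx)]
  exact le_antisymm
    (κ.mono n hn A B hA hB (fun x hx => (h x hx).le) fun x hx => (key x hx).le)
    (κ.mono n hn B A hB hA (fun x hx => (h x hx).ge) fun x hx => (key x hx).ge)

lemma kappa_refl_refl (κ : ConcordanceMeasure) {n : ℕ} (hn : 2 ≤ n) {C : (Fin n → ℝ) → ℝ}
    (hC : IsCopula C) (S T : Finset (Fin n)) :
    κ.κ n (reflTrans T (reflTrans S C)) = κ.κ n (reflTrans (symmDiff S T) C) :=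
  kappa_congr κ hn (isCopula_refl (isCopula_refl hC S) T) (isCopula_refl hC _)
    (refl_refl_cube hC S T)

lemma powerset_singleton' {α : Type*} [DecidableEq α] (a : α) :
    ({a} : Finset α).powerset = {∅, {a}} := by
  rw [show ({a} : Finset α) = insert a ∅ by simp, Finset.powerset_insert]
  simp [← Finset.insert_eq]

lemma sum_powerset_singleton {α : Type*} [DecidableEq α] {M : Type*} [AddCommMonoid M]
    (a : α) (f : Finset α → M) :
    ∑ T ∈ ({a} : Finset α).powerset, f T = f ∅ + f {a} := by
  rw [powerset_singleton', Finset.sum_pair (Finset.singleton_ne_empty a).symm]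

lemma reflTrans_singleton {n : ℕ} (a : Fin n) (C : (Fin n → ℝ) → ℝ) (x : Fin n → ℝ) :
    reflTrans {a} C x
      = C (fun i => if i = a then 1 else x i) - C (fun i => if i = a then 1 - x i else x i) := by
  rw [reflTrans_eq, sum_powerset_singleton]
  have h1 : refp {a} (∅ : Finset (Fin n)) x = fun i => if i = a then 1 else x i := by
    funext i; simp [refp]
  have h2 : refp {a} {a} x = fun i => if i = a then 1 - x i else x i := by
    funext i; by_cases h : i = a <;> simp [refp, h]
  rw [h1, h2]
  simp
  ring

lemma refl_perm {n : ℕ} (τ : Equiv.Perm (Fin n)) (a : Fin n) (C : (Fin n → ℝ) → ℝ) :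
    reflTrans {τ a} (permTrans τ C) = permTrans τ (reflTrans {a} C) := by
  funext x
  rw [reflTrans_singleton]
  unfold permTrans
  rw [reflTrans_singleton]
  congr 1
  · congr 1
    funext j
    simp [Equiv.apply_eq_iff_eq]
  · congr 1
    funext j
    simp [Equiv.apply_eq_iff_eq]

lemma refl_marg {n : ℕ} (C : (Fin (n+1) → ℝ) → ℝ) (a : Fin (n+1)) (b : Fin n) :
    reflTrans {b} (margAt C a) = margAt (reflTrans {a.succAbove b} C) a := by
  funext y
  rw [reflTrans_singleton]
  unfold margAt
  rw [reflTrans_singleton]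
  congr 1
  · congr 1
    funext j
    by_cases hja : j = a
    · rw [hja, Fin.insertNth_apply_same, if_neg (Fin.ne_succAbove a b), Fin.insertNth_apply_same]
    · obtain ⟨k, rfl⟩ := Fin.exists_succAbove_eq hja
      rw [Fin.insertNth_apply_succAbove, Fin.insertNth_apply_succAbove]
      simp [Fin.succAbove_right_injective.eq_iff]
  · congr 1
    funext j
    by_cases hja : j = a
    · rw [hja, Fin.insertNth_apply_same, if_neg (Fin.ne_succAbove a b), Fin.insertNth_apply_same]
    · obtain ⟨k, rfl⟩ := Fin.exists_succAbove_eq hja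
      rw [Fin.insertNth_apply_succAbove, Fin.insertNth_apply_succAbove]
      by_cases hkb : k = b
      · rw [hkb, if_pos rfl, if_pos rfl]
      · rw [if_neg hkb, if_neg (fun h => hkb (Fin.succAbove_right_injective h))]

lemma trans_margAt (κ : ConcordanceMeasure) {n : ℕ} (hn : 2 ≤ n)
    {C : (Fin (n+1) → ℝ) → ℝ} (hC : IsCopula C) (a : Fin (n+1)) :
    κ.r n * κ.κ n (margAt C a) = κ.κ (n+1) C + κ.κ (n+1) (reflTrans {a} C) := by
  have hn1 : 2 ≤ n + 1 := le_trans hn (Nat.le_succ n)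
  have hyp : ∀ x ∈ cube n, margAt C a x = permTrans a.cycleRange C (fun i : Fin (n+1) =>
      if h : (i : ℕ) = 0 then 1 else x ⟨(i : ℕ) - 1, by have := i.isLt; omega⟩) := by
    intro x _
    unfold margAt permTrans
    congr 1
    funext j
    by_cases hja : j = a
    · rw [hja, Fin.insertNth_apply_same, Fin.cycleRange_self]
      simp
    · obtain ⟨k, rfl⟩ := Fin.exists_succAbove_eq hja
      rw [Fin.insertNth_apply_succAbove, Fin.cycleRange_succAbove]
      simp only [Fin.val_succ]
      rw [dif_neg (show ¬((k : ℕ) + 1 = 0) by omega)]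
      congr 1
      all_goals exact Fin.ext (by simp)
  have h1 := κ.transition n hn (margAt C a) (permTrans a.cycleRange C)
    (isCopula_marg hC a) (isCopula_perm hC a.cycleRange) hyp
  have h2 : κ.κ (n+1) (permTrans a.cycleRange C) = κ.κ (n+1) C :=
    κ.permInv (n+1) hn1 C hC a.cycleRange
  have h3 := refl_perm a.cycleRange a C
  rw [Fin.cycleRange_self] at h3
  have h4 : κ.κ (n+1) (reflTrans ({0} : Finset (Fin (n+1))) (permTrans a.cycleRange C))
      = κ.κ (n+1) (reflTrans {a} C) := by
    rw [h3]
    exact κ.permInv (n+1) hn1 _ (isCopula_refl hC {a}) a.cycleRange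
  rw [h1, h2, h4]


lemma orderIsoOfFin_symm_eq {m k : ℕ} {s : Finset (Fin m)} (h : s.card = k) {i : Fin m}
    {hi : i ∈ s} {j : Fin k} (hj : s.orderEmbOfFin h j = i) :
    (s.orderIsoOfFin h).symm ⟨i, hi⟩ = j := by
  have h2 : (s.orderIsoOfFin h) j = ⟨i, hi⟩ :=
    Subtype.ext (by rw [Finset.coe_orderIsoOfFin_apply]; exact hj)
  rw [← h2, OrderIso.symm_apply_apply]

lemma emb_compl_singleton {n : ℕ} (a : Fin (n+1)) (h : (({a} : Finset (Fin (n+1)))ᶜ).card = n)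
    (j : Fin ((({a} : Finset (Fin (n+1)))ᶜ).card)) :
    (({a} : Finset (Fin (n+1)))ᶜ).orderEmbOfFin rfl j = a.succAbove (Fin.cast h j) := by
  have key : (fun j : Fin ((({a} : Finset (Fin (n+1)))ᶜ).card) => a.succAbove (Fin.cast h j))
      = ⇑((({a} : Finset (Fin (n+1)))ᶜ).orderEmbOfFin rfl) :=
    Finset.orderEmbOfFin_unique rfl
      (fun x => by simp [Finset.mem_compl, Fin.succAbove_ne])
      ((Fin.strictMono_succAbove a).comp fun j₁ j₂ hlt => hlt)
  exact (congrFun key j).symm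

lemma properMarg_singleton {n : ℕ} (C : (Fin (n+1) → ℝ) → ℝ) (a : Fin (n+1))
    (h : (({a} : Finset (Fin (n+1)))ᶜ).card = n)
    (y : Fin ((({a} : Finset (Fin (n+1)))ᶜ).card) → ℝ) :
    properMarg C {a} y = margAt C a (fun k => y (Fin.cast h.symm k)) := by
  unfold properMarg margAt
  congr 1
  funext i
  by_cases hia : i = a
  · rw [hia, dif_neg (by simp), Fin.insertNth_apply_same]
  · obtain ⟨k, rfl⟩ := Fin.exists_succAbove_eq hia
    rw [dif_pos (show a.succAbove k ∈ ({a} : Finset (Fin (n+1)))ᶜ by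
        simp [Finset.mem_compl, Fin.succAbove_ne]),
      Fin.insertNth_apply_succAbove]
    congr 1
    apply orderIsoOfFin_symm_eq
    rw [emb_compl_singleton a h]
    congr 1

lemma pm0 (C : (Fin 4 → ℝ) → ℝ) : properMarg C {0} = margAt C (0 : Fin 4) := by
  funext y; exact properMarg_singleton C 0 rfl y

lemma pm1 (C : (Fin 4 → ℝ) → ℝ) : properMarg C {1} = margAt C (1 : Fin 4) := by
  funext y; exact properMarg_singleton C 1 rfl y

lemma pm2 (C : (Fin 4 → ℝ) → ℝ) : properMarg C {2} = margAt C (2 : Fin 4) := by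
  funext y; exact properMarg_singleton C 2 rfl y

lemma pm3 (C : (Fin 4 → ℝ) → ℝ) : properMarg C {3} = margAt C (3 : Fin 4) := by
  funext y; exact properMarg_singleton C 3 rfl y

lemma pm01 (C : (Fin 4 → ℝ) → ℝ) :
    properMarg C {0, 1} = margAt (margAt C (0 : Fin 4)) (0 : Fin 3) := by
  have hemb : ⇑((({0,1} : Finset (Fin 4))ᶜ).orderEmbOfFin rfl) = ![2,3] :=
    (Finset.orderEmbOfFin_unique rfl
      (by show ∀ x : Fin 2, (![2,3] : Fin 2 → Fin 4) x ∈ ({0,1} : Finset (Fin 4))ᶜ; decide)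
      (by show StrictMono (![2,3] : Fin 2 → Fin 4); exact Fin.strictMono_iff_lt_succ.2 (by decide))).symm
  funext y
  unfold properMarg margAt
  congr 1
  funext i
  by_cases h0 : i = 0
  · rw [h0, dif_neg (by decide), Fin.insertNth_apply_same]
  · obtain ⟨j, rfl⟩ := Fin.exists_succAbove_eq h0
    rw [Fin.insertNth_apply_succAbove]
    by_cases h1 : j = 0
    · rw [h1, show (0:Fin 4).succAbove (0:Fin 3) = 1 from rfl, dif_neg (by decide)]
      exact (Fin.insertNth_apply_same (n := 2) (α := fun _ => ℝ) _ _ y).symm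
    · obtain ⟨l, rfl⟩ := Fin.exists_succAbove_eq h1
      rw [Fin.insertNth_apply_succAbove (n := 2) (α := fun _ => ℝ) (p := y)]
      have hmem : (0:Fin 4).succAbove ((0:Fin 3).succAbove l) ∈ ({0,1} : Finset (Fin 4))ᶜ := by
        fin_cases l <;> decide
      rw [dif_pos hmem]
      congr 1
      apply orderIsoOfFin_symm_eq (j := l)
      refine (congrFun hemb l).trans ?_
      fin_cases l <;> decide

lemma pm23 (C : (Fin 4 → ℝ) → ℝ) :
    properMarg C {2, 3} = margAt (margAt C (3 : Fin 4)) (2 : Fin 3) := by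
  have hemb : ⇑((({2,3} : Finset (Fin 4))ᶜ).orderEmbOfFin rfl) = ![0,1] :=
    (Finset.orderEmbOfFin_unique rfl
      (by show ∀ x : Fin 2, (![0,1] : Fin 2 → Fin 4) x ∈ ({2,3} : Finset (Fin 4))ᶜ; decide)
      (by show StrictMono (![0,1] : Fin 2 → Fin 4); exact Fin.strictMono_iff_lt_succ.2 (by decide))).symm
  funext y
  unfold properMarg margAt
  congr 1
  funext i
  by_cases h0 : i = 3
  · rw [h0, dif_neg (by decide), Fin.insertNth_apply_same]
  · obtain ⟨j, rfl⟩ := Fin.exists_succAbove_eq h0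
    rw [Fin.insertNth_apply_succAbove]
    by_cases h1 : j = 2
    · rw [h1, show (3:Fin 4).succAbove (2:Fin 3) = 2 from rfl, dif_neg (by decide)]
      exact (Fin.insertNth_apply_same (n := 2) (α := fun _ => ℝ) _ _ y).symm
    · obtain ⟨l, rfl⟩ := Fin.exists_succAbove_eq h1
      rw [Fin.insertNth_apply_succAbove (n := 2) (α := fun _ => ℝ) (p := y)]
      have hmem : (3:Fin 4).succAbove ((2:Fin 3).succAbove l) ∈ ({2,3} : Finset (Fin 4))ᶜ := by
        fin_cases l <;> decide
      rw [dif_pos hmem]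
      congr 1
      apply orderIsoOfFin_symm_eq (j := l)
      refine (congrFun hemb l).trans ?_
      fin_cases l <;> decide

end Stmt16

open Stmt16 in
/-- Example after Theorem 4.5 of Taylor: for a 4-copula `C` (with `r_2 = 2/3` and
`r_3, r_4 ≠ 0`), `κ_3(C_1) + κ_3(C_2) - (2/3)κ_2(C_12) = κ_3(C_3) + κ_3(C_4) - (2/3)κ_2(C_34)`. -/
theorem stmt16 (κ : ConcordanceMeasure) (hr2 : κ.r 2 = 2/3)
    (hr3 : κ.r 3 ≠ 0) (hr4 : κ.r 4 ≠ 0)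
    (C : (Fin 4 → ℝ) → ℝ) (hC : IsCopula C) :
    κ.κ (({0} : Finset (Fin 4))ᶜ.card) (properMarg C {0}) +
      κ.κ (({1} : Finset (Fin 4))ᶜ.card) (properMarg C {1}) -
      (2/3) * κ.κ (({0, 1} : Finset (Fin 4))ᶜ.card) (properMarg C {0, 1}) =
    κ.κ (({2} : Finset (Fin 4))ᶜ.card) (properMarg C {2}) +
      κ.κ (({3} : Finset (Fin 4))ᶜ.card) (properMarg C {3}) -
      (2/3) * κ.κ (({2, 3} : Finset (Fin 4))ᶜ.card) (properMarg C {2, 3}) := by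
  have h2 : (2:ℕ) ≤ 2 := le_refl 2
  have h3 : (2:ℕ) ≤ 3 := by norm_num
  have h4 : (2:ℕ) ≤ 4 := by norm_num
  have G0 : κ.κ (({0} : Finset (Fin 4))ᶜ.card) (properMarg C {0})
      = κ.κ 3 (margAt C (0:Fin 4)) := congrArg (κ.κ 3) (pm0 C)
  have G1 : κ.κ (({1} : Finset (Fin 4))ᶜ.card) (properMarg C {1})
      = κ.κ 3 (margAt C (1:Fin 4)) := congrArg (κ.κ 3) (pm1 C)
  have G2 : κ.κ (({2} : Finset (Fin 4))ᶜ.card) (properMarg C {2})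
      = κ.κ 3 (margAt C (2:Fin 4)) := congrArg (κ.κ 3) (pm2 C)
  have G3 : κ.κ (({3} : Finset (Fin 4))ᶜ.card) (properMarg C {3})
      = κ.κ 3 (margAt C (3:Fin 4)) := congrArg (κ.κ 3) (pm3 C)
  have G01 : κ.κ (({0, 1} : Finset (Fin 4))ᶜ.card) (properMarg C {0, 1})
      = κ.κ 2 (margAt (margAt C (0:Fin 4)) (0:Fin 3)) := congrArg (κ.κ 2) (pm01 C)
  have G23 : κ.κ (({2, 3} : Finset (Fin 4))ᶜ.card) (properMarg C {2, 3})
      = κ.κ 2 (margAt (margAt C (3:Fin 4)) (2:Fin 3)) := congrArg (κ.κ 2) (pm23 C)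
  rw [G0, G1, G01, G2, G3, G23]
  have t10 : κ.r 3 * κ.κ 3 (margAt C (0:Fin 4))
      = κ.κ 4 C + κ.κ 4 (reflTrans {0} C) := trans_margAt κ h3 hC 0
  have t11 : κ.r 3 * κ.κ 3 (margAt C (1:Fin 4))
      = κ.κ 4 C + κ.κ 4 (reflTrans {1} C) := trans_margAt κ h3 hC 1
  have t12 : κ.r 3 * κ.κ 3 (margAt C (2:Fin 4))
      = κ.κ 4 C + κ.κ 4 (reflTrans {2} C) := trans_margAt κ h3 hC 2
  have t13 : κ.r 3 * κ.κ 3 (margAt C (3:Fin 4))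
      = κ.κ 4 C + κ.κ 4 (reflTrans {3} C) := trans_margAt κ h3 hC 3
  have t2a : κ.r 2 * κ.κ 2 (margAt (margAt C (0:Fin 4)) (0:Fin 3))
      = κ.κ 3 (margAt C (0:Fin 4)) + κ.κ 3 (reflTrans {(0:Fin 3)} (margAt C (0:Fin 4))) :=
    trans_margAt κ h2 (isCopula_marg hC 0) 0
  have t2b : κ.r 2 * κ.κ 2 (margAt (margAt C (3:Fin 4)) (2:Fin 3))
      = κ.κ 3 (margAt C (3:Fin 4)) + κ.κ 3 (reflTrans {(2:Fin 3)} (margAt C (3:Fin 4))) :=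
    trans_margAt κ h2 (isCopula_marg hC 3) 2
  have E2a : reflTrans {(0:Fin 3)} (margAt C (0:Fin 4))
      = margAt (reflTrans {1} C) (0:Fin 4) := by
    have h := refl_marg C (0:Fin 4) (0:Fin 3)
    rw [show (0:Fin 4).succAbove (0:Fin 3) = 1 from rfl] at h
    exact h
  have E2b : reflTrans {(2:Fin 3)} (margAt C (3:Fin 4))
      = margAt (reflTrans {2} C) (3:Fin 4) := by
    have h := refl_marg C (3:Fin 4) (2:Fin 3)
    rw [show (3:Fin 4).succAbove (2:Fin 3) = 2 from rfl] at h
    exact h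
  rw [E2a] at t2a
  rw [E2b] at t2b
  have t3a : κ.r 3 * κ.κ 3 (margAt (reflTrans {1} C) (0:Fin 4))
      = κ.κ 4 (reflTrans {1} C) + κ.κ 4 (reflTrans {0} (reflTrans {1} C)) :=
    trans_margAt κ h3 (isCopula_refl hC {1}) 0
  have t3b : κ.r 3 * κ.κ 3 (margAt (reflTrans {2} C) (3:Fin 4))
      = κ.κ 4 (reflTrans {2} C) + κ.κ 4 (reflTrans {3} (reflTrans {2} C)) :=
    trans_margAt κ h3 (isCopula_refl hC {2}) 3
  have E3a : κ.κ 4 (reflTrans {0} (reflTrans {1} C)) = κ.κ 4 (reflTrans {0,1} C) := by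
    have h := kappa_refl_refl κ h4 hC ({1} : Finset (Fin 4)) {0}
    rw [show symmDiff ({1} : Finset (Fin 4)) {0} = {0,1} from by decide] at h
    exact h
  have E3b : κ.κ 4 (reflTrans {3} (reflTrans {2} C)) = κ.κ 4 (reflTrans {2,3} C) := by
    have h := kappa_refl_refl κ h4 hC ({2} : Finset (Fin 4)) {3}
    rw [show symmDiff ({2} : Finset (Fin 4)) {3} = {2,3} from by decide] at h
    exact h
  rw [E3a] at t3a
  rw [E3b] at t3b
  have T4 : κ.κ 4 (reflTrans ({0,1} : Finset (Fin 4)) C)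
      = κ.κ 4 (reflTrans ({2,3} : Finset (Fin 4)) C) := by
    have hdual := κ.duality 4 h4 (reflTrans ({0,1} : Finset (Fin 4)) C)
      (isCopula_refl hC {0,1})
    have hcomp := kappa_refl_refl κ h4 hC ({0,1} : Finset (Fin 4)) Finset.univ
    rw [show symmDiff ({0,1} : Finset (Fin 4)) Finset.univ = {2,3} from by decide] at hcomp
    rw [← hdual, hcomp]
  rw [hr2] at t2a t2b
  refine mul_left_cancel₀ hr3 ?_
  linear_combination (κ.r 3) * t2b - (κ.r 3) * t2a + t11 - t3a + t3b - t12 - T4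


end
end

section
/- Let κ_2: Cop(2) → ℝ be a bivariate measure of concordance in Scarsini's sense, and for p ≥ 1 define κ_{2+p}(C) = (1/C(2+p,2)) ∑_{T ∈ {1,...,2+p}(p)} κ_2(C_T) for (2+p)-copulas C. Then the transition property holds with r_{1+p} = 2p/(2+p): for every (2+p)-copula C, κ_{2+p}(C) + κ_{2+p}(σ_1*(C)) = r_{1+p} κ_{1+p}(C_1). -/
open MeasureTheory Filter

noncomputable section

/-- The proper bivariate marginal `C_T` of an `m`-copula `C`, for `T` with `card T = m - 2`:
coordinates in `T` are set equal to `1`, and the two remaining coordinates (in increasing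
order) receive the arguments `y 0` and `y 1`. -/
def biMarg {m : ℕ} (D : (Fin m → ℝ) → ℝ) (T : Finset (Fin m)) : (Fin 2 → ℝ) → ℝ :=
  fun y => D fun i => if i ∈ T then 1
    else if 0 < ((Tᶜ).filter (fun j => j < i)).card then y 1 else y 0

/-- The extension of a bivariate measure of concordance `κ_2` to dimension `m`:
`κ_m(C) = (1 / C(m,2)) ∑_{T ∈ {1,…,m}(m-2)} κ_2(C_T)` (that is, `(1/C(m,2)) 𝔅_2(C)`). -/
def kExt (κ2 : ((Fin 2 → ℝ) → ℝ) → ℝ) (m : ℕ) (D : (Fin m → ℝ) → ℝ) : ℝ :=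
  (1 / (m.choose 2 : ℝ)) *
    ∑ T ∈ (Finset.univ : Finset (Fin m)).powersetCard (m - 2), κ2 (biMarg D T)

namespace Stmt19Aux

lemma mem_cube_iff {n : ℕ} (x : Fin n → ℝ) : x ∈ cube n ↔ ∀ i, x i ∈ Set.Icc (0:ℝ) 1 := by
  simp [cube, Set.mem_univ_pi, Pi.le_def, forall_and]

lemma mem_box_iff {n : ℕ} (z x : Fin n → ℝ) : x ∈ box z ↔ ∀ i, x i ∈ Set.Icc 0 (z i) := by
  simp [box, Set.mem_univ_pi, Pi.le_def, forall_and]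

lemma measurableSet_box {n : ℕ} (x : Fin n → ℝ) : MeasurableSet (box x) :=
  MeasurableSet.univ_pi fun _ => measurableSet_Icc

lemma isCopula_congr {n : ℕ} {A B : (Fin n → ℝ) → ℝ} (hB : IsCopula B)
    (h : ∀ x ∈ cube n, A x = B x) : IsCopula A := by
  obtain ⟨μ, h1, h2, h3⟩ := hB
  exact ⟨μ, h1, fun x hx => (h x hx).trans (h2 x hx), h3⟩

lemma marg_null {n : ℕ} {μ : Measure (Fin n → ℝ)}
    (h : ∀ i : Fin n, μ.map (fun y => y i) = volume.restrict (Set.Icc (0:ℝ) 1)) (i : Fin n) :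
    μ {w | w i ∉ Set.Icc (0:ℝ) 1} = 0 := by
  have he : {w : Fin n → ℝ | w i ∉ Set.Icc (0:ℝ) 1}
      = (fun y : Fin n → ℝ => y i) ⁻¹' (Set.Icc (0:ℝ) 1)ᶜ := rfl
  rw [he, ← Measure.map_apply (measurable_pi_apply i) measurableSet_Icc.compl, h i,
    Measure.restrict_apply measurableSet_Icc.compl]
  simp [Set.compl_inter_self]

lemma copula_zero {n : ℕ} {C : (Fin n → ℝ) → ℝ} (hC : IsCopula C) (x : Fin n → ℝ)
    (hx : x ∈ cube n) (i : Fin n) (hxi : x i = 0) : C x = 0 := by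
  obtain ⟨μ, _, h2, h3⟩ := hC
  rw [h2 x hx]
  have hnull : μ (box x) = 0 := by
    have hmap : μ ((fun y : Fin n → ℝ => y i) ⁻¹' {0}) = 0 := by
      rw [← Measure.map_apply (measurable_pi_apply i) (measurableSet_singleton 0), h3 i,
        Measure.restrict_apply (measurableSet_singleton 0)]
      exact measure_mono_null Set.inter_subset_left Real.volume_singleton
    apply measure_mono_null ?_ hmap
    intro w hw
    have h := ((mem_box_iff x w).mp hw) i
    rw [hxi] at h
    simpa using le_antisymm h.2 h.1
  simp [hnull]

lemma kappa_congr (κ2 : ((Fin 2 → ℝ) → ℝ) → ℝ)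
    (hcont : ∀ (C : (Fin 2 → ℝ) → ℝ) (Cm : ℕ → (Fin 2 → ℝ) → ℝ),
      IsCopula C → (∀ k, IsCopula (Cm k)) →
      TendstoUniformlyOn Cm C atTop (cube 2) →
      Tendsto (fun k => κ2 (Cm k)) atTop (nhds (κ2 C)))
    {A B : (Fin 2 → ℝ) → ℝ} (hA : IsCopula A) (hB : IsCopula B)
    (h : ∀ x ∈ cube 2, A x = B x) : κ2 A = κ2 B := by
  have ht : TendstoUniformlyOn (fun _ : ℕ => A) B atTop (cube 2) := by
    intro u hu
    filter_upwards with k x hx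
    rw [h x hx]
    exact refl_mem_uniformity hu
  exact tendsto_nhds_unique tendsto_const_nhds (hcont B (fun _ => A) hB (fun _ => hA) ht)


lemma biMarg_arg_spec {n : ℕ} (T : Finset (Fin n)) (hT : Tᶜ.card = 2) :
    ∃ a b : Fin n, a < b ∧ a ∉ T ∧ b ∉ T ∧ (∀ i, i ∉ T → i = a ∨ i = b) ∧
      (∀ y : Fin 2 → ℝ,
        (fun i => if i ∈ T then (1:ℝ)
            else if 0 < ((Tᶜ).filter (fun j => j < i)).card then y 1 else y 0)
          = fun i => if i ∈ T then 1 else if i = a then y 0 else y 1) := by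
  obtain ⟨a, b, hab, hTc⟩ := Finset.card_eq_two.mp hT
  wlog hlt : a < b generalizing a b
  · exact this b a hab.symm (by rw [hTc]; exact Finset.pair_comm a b)
      (lt_of_le_of_ne (not_lt.mp hlt) hab.symm)
  have hmem : ∀ i, i ∉ T ↔ (i = a ∨ i = b) := by
    intro i
    rw [← Finset.mem_compl, hTc, Finset.mem_insert, Finset.mem_singleton]
  have haT : a ∉ T := (hmem a).mpr (Or.inl rfl)
  have hbT : b ∉ T := (hmem b).mpr (Or.inr rfl)
  refine ⟨a, b, hlt, haT, hbT, fun i hi => (hmem i).mp hi, fun y => ?_⟩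
  funext i
  by_cases hiT : i ∈ T
  · simp [hiT]
  rcases (hmem i).mp hiT with rfl | rfl
  · have hcard : ((Tᶜ).filter (fun j => j < i)).card = 0 := by
      rw [Finset.card_eq_zero, Finset.filter_eq_empty_iff]
      intro j hj
      rcases (hmem j).mp (Finset.mem_compl.mp hj) with rfl | rfl
      · exact lt_irrefl _
      · exact not_lt.mpr hlt.le
    simp [hiT, hcard]
  · have hcard : 0 < ((Tᶜ).filter (fun j => j < i)).card := by
      rw [Finset.card_pos]
      exact ⟨a, Finset.mem_filter.mpr ⟨Finset.mem_compl.mpr haT, hlt⟩⟩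
    have hne : i ≠ a := hlt.ne'
    simp [hiT, hcard, hne]

lemma biMarg_isCopula {n : ℕ} {C : (Fin n → ℝ) → ℝ} (hC : IsCopula C)
    (T : Finset (Fin n)) (hT : Tᶜ.card = 2) : IsCopula (biMarg C T) := by
  obtain ⟨a, b, hab, haT, hbT, hmem, hfun⟩ := biMarg_arg_spec T hT
  obtain ⟨μ, hprob, hbox, hmarg⟩ := hC
  set g : (Fin n → ℝ) → (Fin 2 → ℝ) := fun w j => if j = 0 then w a else w b with hg
  have hgm : Measurable g := by
    apply measurable_pi_iff.mpr
    intro j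
    by_cases h0 : j = 0 <;> simp only [hg, h0, if_true, if_false] <;>
      exact measurable_pi_apply _
  refine ⟨μ.map g, Measure.isProbabilityMeasure_map hgm.aemeasurable, ?_, ?_⟩
  · intro x hx
    have hx' := (mem_cube_iff x).mp hx
    set z : Fin n → ℝ := fun i => if i ∈ T then 1 else if i = a then x 0 else x 1 with hzdef
    have hzc : z ∈ cube n := by
      rw [mem_cube_iff]
      intro i
      rw [hzdef]
      dsimp only
      split_ifs
      · exact ⟨zero_le_one, le_rfl⟩
      · exact hx' 0
      · exact hx' 1
    have hsub : box z ⊆ g ⁻¹' box x := by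
      intro w hw
      have hw' := (mem_box_iff z w).mp hw
      rw [Set.mem_preimage, mem_box_iff]
      intro j
      by_cases h0 : j = 0
      · subst h0
        have := hw' a
        simpa [hg, hzdef, haT] using this
      · have h1 : j = 1 := by omega
        subst h1
        have := hw' b
        simpa [hg, hzdef, hbT, hab.ne', h0] using this
    have hdiff : g ⁻¹' box x \ box z ⊆ ⋃ i ∈ T, {w : Fin n → ℝ | w i ∉ Set.Icc (0:ℝ) 1} := by
      rintro w ⟨hw1, hw2⟩
      rw [Set.mem_preimage, mem_box_iff] at hw1
      rw [mem_box_iff] at hw2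
      push_neg at hw2
      obtain ⟨i, hi⟩ := hw2
      by_cases hiT : i ∈ T
      · refine Set.mem_biUnion hiT ?_
        simpa [hzdef, hiT] using hi
      · exfalso
        rcases hmem i hiT with rfl | rfl
        · exact hi (by simpa [hzdef, hiT, hg] using hw1 0)
        · have := hw1 1
          simp only [hg] at this
          rw [if_neg (by omega : (1 : Fin 2) ≠ 0)] at this
          exact hi (by simpa [hzdef, hiT, hab.ne'] using this)
    have hnull : μ (⋃ i ∈ T, {w : Fin n → ℝ | w i ∉ Set.Icc (0:ℝ) 1}) = 0 := by
      refine (measure_biUnion_null_iff T.countable_toSet).mpr fun i _ => marg_null hmarg i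
    have key : μ (g ⁻¹' box x) = μ (box z) := by
      refine le_antisymm ?_ (measure_mono hsub)
      calc μ (g ⁻¹' box x) ≤ μ (box z ∪ (g ⁻¹' box x \ box z)) :=
            measure_mono (fun w hw => by
              by_cases h : w ∈ box z
              · exact Or.inl h
              · exact Or.inr ⟨hw, h⟩)
        _ ≤ μ (box z) + μ (g ⁻¹' box x \ box z) := measure_union_le _ _
        _ = μ (box z) := by rw [measure_mono_null hdiff hnull, add_zero]
    have hbm : biMarg C T x = C z := by
      rw [biMarg, hfun x]
    rw [hbm, hbox z hzc, Measure.map_apply hgm (measurableSet_box x), key]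
  · intro j
    rw [Measure.map_map (measurable_pi_apply j) hgm]
    have hcomp : (fun y : Fin 2 → ℝ => y j) ∘ g = fun w => w (if j = 0 then a else b) := by
      funext w
      by_cases h0 : j = 0 <;> simp [hg, h0]
    rw [hcomp]
    exact hmarg _


lemma reflTrans_singleton {n : ℕ} (i0 : Fin n) (C : (Fin n → ℝ) → ℝ) (x : Fin n → ℝ) :
    reflTrans {i0} C x =
      C (fun i => if i = i0 then 1 else x i) - C (fun i => if i = i0 then 1 - x i else x i) := by
  have hpow : ({i0} : Finset (Fin n)).powerset = {∅, {i0}} := by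
    ext s
    simp [Finset.subset_singleton_iff]
  rw [reflTrans, hpow, Finset.sum_insert (by simp [Finset.mem_singleton]), Finset.sum_singleton]
  have e1 : (fun i => if i ∈ (∅ : Finset (Fin n)) then 1 - x i
      else if i ∈ ({i0} : Finset (Fin n)) then 1 else x i)
      = fun i => if i = i0 then (1:ℝ) else x i := by
    funext i
    simp [Finset.mem_singleton]
  have e2 : (fun i => if i ∈ ({i0} : Finset (Fin n)) then 1 - x i
      else if i ∈ ({i0} : Finset (Fin n)) then 1 else x i)
      = fun i => if i = i0 then 1 - x i else x i := by
    funext i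
    by_cases h : i = i0 <;> simp [h]
  rw [e1, e2]
  simp [sub_eq_add_neg]

lemma refl_biMarg_mem {n : ℕ} {C : (Fin n → ℝ) → ℝ} (hC : IsCopula C) (i0 : Fin n)
    (T : Finset (Fin n)) (hi0 : i0 ∈ T) :
    ∀ y ∈ cube 2, biMarg (reflTrans {i0} C) T y = biMarg C T y := by
  intro y hy
  have hy' := (mem_cube_iff y).mp hy
  set z : Fin n → ℝ := fun i => if i ∈ T then 1
      else if 0 < ((Tᶜ).filter (fun j => j < i)).card then y 1 else y 0 with hz
  have hlhs : biMarg (reflTrans {i0} C) T y = reflTrans {i0} C z := rfl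
  have hrhs : biMarg C T y = C z := rfl
  rw [hlhs, hrhs, reflTrans_singleton]
  have hz0 : z i0 = 1 := by simp [hz, hi0]
  have hz01 : ∀ i, z i ∈ Set.Icc (0:ℝ) 1 := by
    intro i
    rw [hz]
    dsimp only
    split_ifs
    · exact ⟨zero_le_one, le_rfl⟩
    · exact hy' 1
    · exact hy' 0
  have h1 : (fun i => if i = i0 then (1:ℝ) else z i) = z := by
    funext i
    by_cases h : i = i0
    · subst h; simp [hz0]
    · simp [h]
  have h2 : C (fun i => if i = i0 then 1 - z i else z i) = 0 := by
    apply copula_zero hC _ ?_ i0 ?_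
    · rw [mem_cube_iff]
      intro i
      show (if i = i0 then 1 - z i else z i) ∈ Set.Icc (0:ℝ) 1
      split_ifs with h
      · constructor
        · linarith [(hz01 i).2]
        · linarith [(hz01 i).1]
      · exact hz01 i
    · simp [hz0]
  rw [h1, h2, sub_zero]

lemma refl_biMarg_not_mem {n : ℕ} (C : (Fin n → ℝ) → ℝ) (i0 : Fin n)
    (hmin : ∀ j : Fin n, ¬ j < i0) (T : Finset (Fin n)) (hi0 : i0 ∉ T) :
    biMarg (reflTrans {i0} C) T = reflTrans {(0 : Fin 2)} (biMarg C T) := by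
  funext y
  set z : Fin n → ℝ := fun i => if i ∈ T then 1
      else if 0 < ((Tᶜ).filter (fun j => j < i)).card then y 1 else y 0 with hz
  have hfilt0 : ((Tᶜ).filter (fun j => j < i0)).card = 0 := by
    rw [Finset.card_eq_zero, Finset.filter_eq_empty_iff]
    exact fun j _ => hmin j
  have hz0 : z i0 = y 0 := by
    show (if i0 ∈ T then (1:ℝ)
      else if 0 < ((Tᶜ).filter (fun j => j < i0)).card then y 1 else y 0) = y 0
    rw [if_neg hi0, if_neg (by simp [hfilt0])]
  have key : ∀ c : ℝ,
      (fun i => if i ∈ T then (1:ℝ)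
        else if 0 < ((Tᶜ).filter (fun j => j < i)).card
          then (fun j : Fin 2 => if j = 0 then c else y j) 1
          else (fun j : Fin 2 => if j = 0 then c else y j) 0)
      = fun i => if i = i0 then c else z i := by
    intro c
    funext i
    have hy1 : (fun j : Fin 2 => if j = 0 then c else y j) 1 = y 1 := by norm_num
    have hy0 : (fun j : Fin 2 => if j = 0 then c else y j) 0 = c := by norm_num
    rw [hy1, hy0]
    have hzi : z i = if i ∈ T then (1:ℝ)
        else if 0 < ((Tᶜ).filter (fun j => j < i)).card then y 1 else y 0 := rfl
    by_cases hiT : i ∈ T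
    · have hne : i ≠ i0 := fun h => hi0 (h ▸ hiT)
      rw [if_pos hiT, if_neg hne, hzi, if_pos hiT]
    · by_cases hpos : 0 < ((Tᶜ).filter (fun j => j < i)).card
      · have hne : i ≠ i0 := by
          intro h
          rw [h, hfilt0] at hpos
          exact lt_irrefl 0 hpos
        rw [if_neg hiT, if_pos hpos, if_neg hne, hzi, if_neg hiT, if_pos hpos]
      · have heq : i = i0 := by
          by_contra hne
          rcases lt_or_gt_of_ne hne with h | h
          · exact hmin i h
          · exact hpos (Finset.card_pos.mpr
              ⟨i0, Finset.mem_filter.mpr ⟨Finset.mem_compl.mpr hi0, h⟩⟩)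
        rw [if_neg hiT, if_neg hpos, if_pos heq]
  have hlhs : biMarg (reflTrans {i0} C) T y = reflTrans {i0} C z := rfl
  rw [hlhs, reflTrans_singleton, reflTrans_singleton]
  have hb1 : biMarg C T (fun j : Fin 2 => if j = (0:Fin 2) then 1 else y j)
      = C (fun i => if i = i0 then 1 else z i) := by
    rw [biMarg, key 1]
  have e0 : (fun j : Fin 2 => if j = (0:Fin 2) then 1 - y j else y j)
      = fun j : Fin 2 => if j = (0:Fin 2) then 1 - y 0 else y j := by
    funext j
    by_cases h : j = 0
    · subst h; simp
    · simp [h]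
  have hb2 : biMarg C T (fun j : Fin 2 => if j = (0:Fin 2) then 1 - y j else y j)
      = C (fun i => if i = i0 then 1 - y 0 else z i) := by
    rw [e0, biMarg, key (1 - y 0)]
  rw [hb1, hb2]
  have e2 : (fun i => if i = i0 then 1 - z i else z i)
      = fun i => if i = i0 then 1 - y 0 else z i := by
    funext i
    by_cases h : i = i0
    · subst h; simp [hz0]
    · simp [h]
  rw [e2]


def fmap (p : ℕ) : Fin (1+p) → Fin (2+p) := fun j => ⟨j.val + 1, by omega⟩

def gmap (p : ℕ) : Fin (2+p) → Fin (1+p) := fun i => ⟨i.val - 1, by have := i.isLt; omega⟩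

def i00 (p : ℕ) : Fin (2+p) := ⟨0, by omega⟩

lemma fmap_gmap (p : ℕ) (i : Fin (2+p)) (h : (i : ℕ) ≠ 0) : fmap p (gmap p i) = i := by
  apply Fin.ext
  simp [fmap, gmap]
  omega

lemma gmap_fmap (p : ℕ) (j : Fin (1+p)) : gmap p (fmap p j) = j := by
  apply Fin.ext
  simp [fmap, gmap]

lemma fmap_inj (p : ℕ) : Function.Injective (fmap p) := by
  intro a b h
  have := congrArg Fin.val h
  simp [fmap] at this
  exact Fin.ext this

lemma fmap_ne_i00 (p : ℕ) (j : Fin (1+p)) : fmap p j ≠ i00 p := by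
  intro h
  have := congrArg Fin.val h
  simp [fmap, i00] at this

lemma reindex (p : ℕ) (C : (Fin (2+p) → ℝ) → ℝ) (T' : Finset (Fin (1+p))) :
    biMarg C (insert (i00 p) (T'.image (fmap p))) =
      biMarg (fun y => C fun i : Fin (2+p) =>
        if h : (i : ℕ) = 0 then 1 else y ⟨(i:ℕ)-1, by have := i.isLt; omega⟩) T' := by
  funext y
  show C _ = C _
  congr 1
  funext i
  by_cases h0 : (i : ℕ) = 0
  · have hii : i = i00 p := Fin.ext h0
    rw [dif_pos h0, if_pos (by rw [hii]; exact Finset.mem_insert_self _ _)]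
  · rw [dif_neg h0]
    have hji : fmap p (gmap p i) = i := fmap_gmap p i h0
    have hmemiff : i ∈ insert (i00 p) (T'.image (fmap p)) ↔ gmap p i ∈ T' := by
      constructor
      · intro h
        rcases Finset.mem_insert.mp h with h | h
        · exact absurd (congrArg Fin.val h) (by simpa [i00] using h0)
        · obtain ⟨k, hk, hfk⟩ := Finset.mem_image.mp h
          have : k = gmap p i := by
            apply Fin.ext
            have := congrArg Fin.val hfk
            simp [fmap, gmap] at this ⊢
            omega
          rwa [this] at hk
      · intro h
        exact Finset.mem_insert.mpr (Or.inr (Finset.mem_image.mpr ⟨gmap p i, h, hji⟩))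
    have hfiltiff : (0 < (((insert (i00 p) (T'.image (fmap p)))ᶜ).filter
          (fun k => k < i)).card) ↔ 0 < ((T'ᶜ).filter (fun k => k < gmap p i)).card := by
      rw [Finset.card_pos, Finset.card_pos, Finset.filter_nonempty_iff,
        Finset.filter_nonempty_iff]
      constructor
      · rintro ⟨k, hk, hki⟩
        have hk' : k ∉ insert (i00 p) (T'.image (fmap p)) := Finset.mem_compl.mp hk
        have hk0 : (k : ℕ) ≠ 0 := by
          intro h
          exact hk' (Finset.mem_insert.mpr (Or.inl (Fin.ext h)))
        refine ⟨gmap p k, Finset.mem_compl.mpr ?_, ?_⟩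
        · intro hmem
          exact hk' (Finset.mem_insert.mpr (Or.inr
            (Finset.mem_image.mpr ⟨gmap p k, hmem, fmap_gmap p k hk0⟩)))
        · have hlt := (Fin.lt_def).mp hki
          rw [Fin.lt_def]
          simp [gmap]
          omega
      · rintro ⟨k', hk', hk'j⟩
        refine ⟨fmap p k', Finset.mem_compl.mpr ?_, ?_⟩
        · intro hmem
          rcases Finset.mem_insert.mp hmem with h | h
          · exact fmap_ne_i00 p k' h
          · obtain ⟨k'', hk'', e⟩ := Finset.mem_image.mp h
            exact Finset.mem_compl.mp hk' (fmap_inj p e ▸ hk'')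
        · have hlt := (Fin.lt_def).mp hk'j
          rw [Fin.lt_def]
          simp [fmap, gmap] at hlt ⊢
          omega
    rw [if_congr hmemiff rfl (if_congr hfiltiff rfl rfl)]
    rfl

lemma two_mul_choose_two (n : ℕ) : 2 * n.choose 2 = n * (n - 1) := by
  rw [Nat.choose_two_right]
  apply Nat.mul_div_cancel'
  rcases n with _ | m
  · simp
  · simpa [Nat.succ_sub_one, mul_comm] using (Nat.even_mul_succ_self m).two_dvd


end Stmt19Aux

open Stmt19Aux in
theorem stmt19' (κ2 : ((Fin 2 → ℝ) → ℝ) → ℝ)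
    (hcont : ∀ (C : (Fin 2 → ℝ) → ℝ) (Cm : ℕ → (Fin 2 → ℝ) → ℝ),
      IsCopula C → (∀ k, IsCopula (Cm k)) →
      TendstoUniformlyOn Cm C atTop (cube 2) →
      Tendsto (fun k => κ2 (Cm k)) atTop (nhds (κ2 C)))
    (hsign : ∀ C : (Fin 2 → ℝ) → ℝ, IsCopula C →
      κ2 (reflTrans {0} C) = -κ2 C ∧ κ2 (reflTrans {1} C) = -κ2 C)
    (p : ℕ) (hp : 1 ≤ p) (C : (Fin (2 + p) → ℝ) → ℝ) (hC : IsCopula C) :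
    kExt κ2 (2 + p) C + kExt κ2 (2 + p) (reflTrans {i00 p} C) =
      (2 * (p : ℝ) / (2 + (p : ℝ))) * kExt κ2 (1 + p)
        (fun y => C fun i : Fin (2 + p) =>
          if h : (i : ℕ) = 0 then 1 else y ⟨(i : ℕ) - 1, by have := i.isLt; exact (by omega : (i : ℕ) < 2 + p → (i : ℕ) - 1 < 1 + p) this⟩) := by
  classical
  set C1 : (Fin (1 + p) → ℝ) → ℝ := fun y => C fun i : Fin (2 + p) =>
      if h : (i : ℕ) = 0 then 1 else y ⟨(i : ℕ) - 1, by have := i.isLt; omega⟩ with hC1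
  set P := (Finset.univ : Finset (Fin (2 + p))).powersetCard (2 + p - 2) with hP
  set P' := (Finset.univ : Finset (Fin (1 + p))).powersetCard (1 + p - 2) with hP'
  have hTc : ∀ T ∈ P, Tᶜ.card = 2 := by
    intro T hT
    have h2 := (Finset.mem_powersetCard.mp hT).2
    rw [Finset.card_compl]
    simp only [Fintype.card_fin]
    omega
  have hmin : ∀ j : Fin (2 + p), ¬ j < i00 p := by
    intro j h
    rw [Fin.lt_def] at h
    simp [i00] at h
  -- sums
  have hsplitC : ∑ T ∈ P, κ2 (biMarg C T)
      = ∑ T ∈ P.filter (fun T => i00 p ∈ T), κ2 (biMarg C T)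
        + ∑ T ∈ P.filter (fun T => ¬ i00 p ∈ T), κ2 (biMarg C T) :=
    (Finset.sum_filter_add_sum_filter_not P _ _).symm
  have hin : ∀ T ∈ P.filter (fun T => i00 p ∈ T),
      κ2 (biMarg (reflTrans {i00 p} C) T) = κ2 (biMarg C T) := by
    intro T hT
    obtain ⟨hTP, hiT⟩ := Finset.mem_filter.mp hT
    have hcop : IsCopula (biMarg C T) := biMarg_isCopula hC T (hTc T hTP)
    have heq := refl_biMarg_mem hC (i00 p) T hiT
    exact kappa_congr κ2 hcont (isCopula_congr hcop heq) hcop heq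
  have hout : ∀ T ∈ P.filter (fun T => ¬ i00 p ∈ T),
      κ2 (biMarg (reflTrans {i00 p} C) T) = -κ2 (biMarg C T) := by
    intro T hT
    obtain ⟨hTP, hiT⟩ := Finset.mem_filter.mp hT
    rw [refl_biMarg_not_mem C (i00 p) hmin T hiT]
    exact (hsign _ (biMarg_isCopula hC T (hTc T hTP))).1
  have hsplitσ : ∑ T ∈ P, κ2 (biMarg (reflTrans {i00 p} C) T)
      = ∑ T ∈ P.filter (fun T => i00 p ∈ T), κ2 (biMarg C T)
        - ∑ T ∈ P.filter (fun T => ¬ i00 p ∈ T), κ2 (biMarg C T) := by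
    rw [← Finset.sum_filter_add_sum_filter_not P (fun T => i00 p ∈ T)
      (fun T => κ2 (biMarg (reflTrans {i00 p} C) T)),
      Finset.sum_congr rfl hin, Finset.sum_congr rfl hout, Finset.sum_neg_distrib]
    ring
  have hbij : ∑ T ∈ P.filter (fun T => i00 p ∈ T), κ2 (biMarg C T)
      = ∑ T' ∈ P', κ2 (biMarg C1 T') := by
    refine Finset.sum_nbij' (fun T => (T.erase (i00 p)).image (gmap p))
      (fun T' => insert (i00 p) (T'.image (fmap p))) ?_ ?_ ?_ ?_ ?_
    · intro T hT
      obtain ⟨hTP, hiT⟩ := Finset.mem_filter.mp hT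
      have hcard := (Finset.mem_powersetCard.mp hTP).2
      rw [hP', Finset.mem_powersetCard]
      refine ⟨Finset.subset_univ _, ?_⟩
      rw [Finset.card_image_of_injOn, Finset.card_erase_of_mem hiT, hcard]
      · omega
      · intro a ha b hb hab
        have ha0 : (a : ℕ) ≠ 0 := fun h => (Finset.ne_of_mem_erase ha) (Fin.ext h)
        have hb0 : (b : ℕ) ≠ 0 := fun h => (Finset.ne_of_mem_erase hb) (Fin.ext h)
        have := congrArg Fin.val hab
        simp only [gmap] at this
        exact Fin.ext (by omega)
    · intro T' hT'
      have hcard := (Finset.mem_powersetCard.mp hT').2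
      rw [Finset.mem_filter]
      refine ⟨?_, Finset.mem_insert_self _ _⟩
      rw [hP, Finset.mem_powersetCard]
      refine ⟨Finset.subset_univ _, ?_⟩
      rw [Finset.card_insert_of_notMem, Finset.card_image_of_injective _ (fmap_inj p), hcard]
      · omega
      · intro hmem
        obtain ⟨k, _, hk⟩ := Finset.mem_image.mp hmem
        exact fmap_ne_i00 p k hk
    · intro T hT
      obtain ⟨hTP, hiT⟩ := Finset.mem_filter.mp hT
      show insert (i00 p) (((T.erase (i00 p)).image (gmap p)).image (fmap p)) = T
      rw [Finset.image_image]
      have himg : (T.erase (i00 p)).image (fmap p ∘ gmap p) = T.erase (i00 p) := by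
        apply Finset.image_congr (g := id) ?_ |>.trans (Finset.image_id)
        intro k hk
        have hk0 : (k : ℕ) ≠ 0 := fun h => (Finset.ne_of_mem_erase hk) (Fin.ext h)
        exact fmap_gmap p k hk0
      rw [himg, Finset.insert_erase hiT]
    · intro T' hT'
      show ((insert (i00 p) (T'.image (fmap p))).erase (i00 p)).image (gmap p) = T'
      rw [Finset.erase_insert, Finset.image_image]
      · have : T'.image (gmap p ∘ fmap p) = T'.image id :=
          Finset.image_congr (fun k _ => gmap_fmap p k)
        rw [this, Finset.image_id]
      · intro hmem
        obtain ⟨k, _, hk⟩ := Finset.mem_image.mp hmem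
        exact fmap_ne_i00 p k hk
    · intro T hT
      obtain ⟨hTP, hiT⟩ := Finset.mem_filter.mp hT
      have hrec : T = insert (i00 p) (((T.erase (i00 p)).image (gmap p)).image (fmap p)) := by
        rw [Finset.image_image]
        have himg : (T.erase (i00 p)).image (fmap p ∘ gmap p) = T.erase (i00 p) := by
          apply Finset.image_congr (g := id) ?_ |>.trans (Finset.image_id)
          intro k hk
          have hk0 : (k : ℕ) ≠ 0 := fun h => (Finset.ne_of_mem_erase hk) (Fin.ext h)
          exact fmap_gmap p k hk0
        rw [himg, Finset.insert_erase hiT]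
      conv_lhs => rw [hrec]
      rw [reindex p C ((T.erase (i00 p)).image (gmap p))]
  -- numeric part
  have hn1 : 2 * ((2 + p).choose 2) = (2 + p) * (1 + p) := by
    rw [two_mul_choose_two]
    congr 1
    omega
  have hn2 : 2 * ((1 + p).choose 2) = (1 + p) * p := by
    rw [two_mul_choose_two]
    congr 1
    omega
  have hNr : 2 * (((2 + p).choose 2 : ℕ) : ℝ) = (2 + (p : ℝ)) * (1 + (p : ℝ)) := by
    exact_mod_cast hn1
  have hN'r : 2 * (((1 + p).choose 2 : ℕ) : ℝ) = (1 + (p : ℝ)) * (p : ℝ) := by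
    exact_mod_cast hn2
  have hNne : (((2 + p).choose 2 : ℕ) : ℝ) ≠ 0 := by
    have : 0 < (2 + p).choose 2 := Nat.choose_pos (by omega)
    exact_mod_cast this.ne'
  have hN'ne : (((1 + p).choose 2 : ℕ) : ℝ) ≠ 0 := by
    have : 0 < (1 + p).choose 2 := Nat.choose_pos (by omega)
    exact_mod_cast this.ne'
  have hpne : (2 : ℝ) + (p : ℝ) ≠ 0 := by positivity
  have hcoeff : (1 / (((2 + p).choose 2 : ℕ) : ℝ)) * 2
      = 2 * (p : ℝ) / (2 + (p : ℝ)) * (1 / (((1 + p).choose 2 : ℕ) : ℝ)) := by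
    field_simp
    nlinarith [hNr, hN'r]
  simp only [kExt]
  rw [← hP, ← hP', hsplitC, hsplitσ, hbij]
  linear_combination (∑ T' ∈ P', κ2 (biMarg C1 T')) * hcoeff


/-- Theorem 4.3 of Taylor (transition-property part): if `κ_2` is a bivariate measure of
concordance in Scarsini's sense and `κ_{2+p}` is defined by `(1/C(2+p,2)) 𝔅_2(C)`, then the
transition property holds with `r_{1+p} = 2p/(2+p)`:
`κ_{2+p}(C) + κ_{2+p}(σ_1*(C)) = r_{1+p} κ_{1+p}(C_1)`. -/
theorem stmt19 (κ2 : ((Fin 2 → ℝ) → ℝ) → ℝ)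
    (hM : κ2 (fun y => min (y 0) (y 1)) = 1)
    (hPi : κ2 (fun y => y 0 * y 1) = 0)
    (hcont : ∀ (C : (Fin 2 → ℝ) → ℝ) (Cm : ℕ → (Fin 2 → ℝ) → ℝ),
      IsCopula C → (∀ k, IsCopula (Cm k)) →
      TendstoUniformlyOn Cm C atTop (cube 2) →
      Tendsto (fun k => κ2 (Cm k)) atTop (nhds (κ2 C)))
    (hperm : ∀ C : (Fin 2 → ℝ) → ℝ, IsCopula C →
      ∀ τ : Equiv.Perm (Fin 2), κ2 (permTrans τ C) = κ2 C)
    (hmono : ∀ A B : (Fin 2 → ℝ) → ℝ, IsCopula A → IsCopula B →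
      (∀ x ∈ cube 2, A x ≤ B x) →
      (∀ x ∈ cube 2, reflTrans Finset.univ A x ≤ reflTrans Finset.univ B x) →
      κ2 A ≤ κ2 B)
    (hsign : ∀ C : (Fin 2 → ℝ) → ℝ, IsCopula C →
      κ2 (reflTrans {0} C) = -κ2 C ∧ κ2 (reflTrans {1} C) = -κ2 C)
    (p : ℕ) (hp : 1 ≤ p) (C : (Fin (2 + p) → ℝ) → ℝ) (hC : IsCopula C) :
    kExt κ2 (2 + p) C + kExt κ2 (2 + p) (reflTrans {(⟨0, by omega⟩ : Fin (2 + p))} C) =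
      (2 * (p : ℝ) / (2 + (p : ℝ))) * kExt κ2 (1 + p)
        (fun y => C fun i : Fin (2 + p) =>
          if h : (i : ℕ) = 0 then 1 else y ⟨(i : ℕ) - 1, by have := i.isLt; omega⟩) := by
  exact stmt19' κ2 hcont hsign p hp C hC

end
end
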